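/- arXiv:2504.03898 — 3 statements merged into one kernel-verified Lean document; each statement's English description precedes it below -/
import Mathlib

section
/- For every n ≥ 1, the reflexive–transitive closure ≤ of the relation ⇀ on X_n is antisymmetric, hence a partial order on X_n; moreover ⇀ is exactly the covering relation of ≤ (u ⇀ w iff u < w and there is no v with u < v < w), and the identity signed permutation 1 2 ⋯ n is the minimum element of (X_n, ≤): id ≤ w for all w ∈ X_n. -/
open scoped Classical

/-- A signed permutation of length `n`: a permutation `w` of `ℤ` with
`w(-i) = -w(i)` that fixes every integer of absolute value greater than `n`. -/
def IsSignedPerm (n : ℕ) (w : Equiv.Perm ℤ) : Prop :=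
  (∀ i : ℤ, w (-i) = - w i) ∧ ∀ i : ℤ, (n : ℤ) < |i| → w i = i

/-- Membership in `X_n := {w ∈ 𝔅_n : w⁻¹(1) > 0}`. -/
def InXn (n : ℕ) (w : Equiv.Perm ℤ) : Prop :=
  IsSignedPerm n w ∧ 0 < w.symm 1

/-- The type B descent number `des_B(w) = #{i ∈ {0,…,n-1} : w_i > w_{i+1}}`,
with the convention `w_0 = 0` (automatic, since a signed permutation fixes `0`). -/
noncomputable def desB (n : ℕ) (w : Equiv.Perm ℤ) : ℕ :=
  ((Finset.range n).filter fun i => w ((i : ℤ) + 1) < w (i : ℤ)).card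

/-- The flag-excedance `fexc(w) = 2·#{i : w_i > i} + #{i : w_i < 0}`. -/
noncomputable def fexc (n : ℕ) (w : Equiv.Perm ℤ) : ℕ :=
  2 * ((Finset.Icc (1 : ℤ) (n : ℤ)).filter fun i => i < w i).card
    + ((Finset.Icc (1 : ℤ) (n : ℤ)).filter fun i => w i < 0).card

/-- The cyclic successor on `{-n,…,-1,1,…,n}` (with `(-1)⁺ = 1` and `n⁺ = -n`). -/
def csucc (n : ℕ) (i : ℤ) : ℤ :=
  if i = -1 then 1 else if i = (n : ℤ) then -(n : ℤ) else i + 1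

/-- The circular descent set `CDes(w) = {i ∈ {-n,…,-1,1,…,n} : w(i) > w(i⁺)}`. -/
noncomputable def cdesSet (n : ℕ) (w : Equiv.Perm ℤ) : Finset ℤ :=
  (Finset.Icc (-(n : ℤ)) (n : ℤ)).filter fun i => i ≠ 0 ∧ w (csucc n i) < w i

/-- The circular descent number `cdes(w) = |CDes(w)|`. -/
noncomputable def cdes (n : ℕ) (w : Equiv.Perm ℤ) : ℕ := (cdesSet n w).card

/-- `a ≪ b`: there is a nonzero integer strictly between `a` and `b`. -/
def Lll (a b : ℤ) : Prop := ∃ c : ℤ, c ≠ 0 ∧ a < c ∧ c < b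

/-- The big ascent number `basc(w) = |BAsc(w)|`, where `BAsc(w) ⊆ {-1,1,…,n}`:
`-1 ∈ BAsc(w)` iff `w_1 ≥ 2`; for `1 ≤ i ≤ n-1`, `i ∈ BAsc(w)` iff `w_i ≪ w_{i+1}`;
and `n ∈ BAsc(w)` iff `w_n ≤ -2`. -/
noncomputable def basc (n : ℕ) (w : Equiv.Perm ℤ) : ℕ :=
  ((insert (-1 : ℤ) (Finset.Icc (1 : ℤ) (n : ℤ))).filter fun i =>
    if i = -1 then 2 ≤ w 1
    else if i = (n : ℤ) then w (n : ℤ) ≤ -2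
    else Lll (w i) (w (i + 1))).card

/-- `L'_{n,k}(r)`: the number of half-integer points in the `r`-th dilate of the
half-open type C hypersimplex `Δ'_{C_n,k}`, in the `y`-coordinates. -/
noncomputable def Lp (n k r : ℕ) : ℕ :=
  if k = 1 then
    Set.ncard {y : Fin n → ℤ |
      (∀ j, 0 ≤ y j ∧ y j ≤ 2 * (r : ℤ)) ∧ (∀ j : Fin n, (j : ℕ) = 0 → y j ≤ (r : ℤ)) ∧
      0 ≤ ∑ j, y j ∧ ∑ j, y j ≤ (r : ℤ)}
  else
    Set.ncard {y : Fin n → ℤ |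
      (∀ j, 0 ≤ y j ∧ y j ≤ 2 * (r : ℤ)) ∧ (∀ j : Fin n, (j : ℕ) = 0 → y j ≤ (r : ℤ)) ∧
      ((k : ℤ) - 1) * r < ∑ j, y j ∧ ∑ j, y j ≤ (k : ℤ) * r}

/-- `L_{n,k}(r)`: the number of half-integer points in the `r`-th dilate of the
closed type C hypersimplex `Δ_{C_n,k}`, in the `y`-coordinates. -/
noncomputable def Lc (n k r : ℕ) : ℕ :=
  Set.ncard {y : Fin n → ℤ |
    (∀ j, 0 ≤ y j ∧ y j ≤ 2 * (r : ℤ)) ∧ (∀ j : Fin n, (j : ℕ) = 0 → y j ≤ (r : ℤ)) ∧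
    ((k : ℤ) - 1) * r ≤ ∑ j, y j ∧ ∑ j, y j ≤ (k : ℤ) * r}

/-- `ψ_{n,k} = #{w ∈ X_n : basc(w) = k}`. -/
noncomputable def psiN (n k : ℕ) : ℕ :=
  {w : Equiv.Perm ℤ | InXn n w ∧ basc n w = k}.ncard

/-- `ψ_{n,k}` with an integer index (`0` for negative `k`). -/
noncomputable def psiZ (n : ℕ) (k : ℤ) : ℕ :=
  {w : Equiv.Perm ℤ | InXn n w ∧ (basc n w : ℤ) = k}.ncard

/-- `Ψ_{C_n}(t) = Σ_k ψ_{n,k} t^k ∈ ℤ[t]`. -/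
noncomputable def PsiC (n : ℕ) : Polynomial ℤ :=
  ∑ᶠ k : ℕ, (psiN n k : Polynomial ℤ) * Polynomial.X ^ k

/-- `Ψ_{C_n}(t)` with rational coefficients. -/
noncomputable def PsiCQ (n : ℕ) : Polynomial ℚ :=
  ∑ᶠ k : ℕ, (psiN n k : Polynomial ℚ) * Polynomial.X ^ k

/-- The descent number of a permutation of `{1,…,m}`. -/
noncomputable def desA (m : ℕ) (σ : Equiv.Perm (Fin m)) : ℕ :=
  (Finset.univ.filter fun i : Fin m =>
    ∃ h : (i : ℕ) + 1 < m, σ ⟨(i : ℕ) + 1, h⟩ < σ i).card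

/-- The classical (type A) Eulerian polynomial `E_m^A(t) = Σ_{σ ∈ S_m} t^{des σ}`. -/
noncomputable def EulerianA (m : ℕ) : Polynomial ℚ :=
  ∑ σ : Equiv.Perm (Fin m), Polynomial.X ^ desA m σ

/-- The relation `u ⇀ w` on `X_n`. -/
def covRel (n : ℕ) (u w : Equiv.Perm ℤ) : Prop :=
  InXn n u ∧ InXn n w ∧
    ((2 ≤ w 1 ∧ u = w * Equiv.swap (1 : ℤ) (-1)) ∨
     (∃ i : ℤ, 1 ≤ i ∧ i ≤ (n : ℤ) - 1 ∧ Lll (w i) (w (i + 1)) ∧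
        u = w * (Equiv.swap i (i + 1) * Equiv.swap (-i) (-(i + 1)))) ∨
     (w (n : ℤ) ≤ -2 ∧ u = w * Equiv.swap (n : ℤ) (-(n : ℤ))))

/-- The `i`-th coordinate (`1 ≤ i ≤ n`) of the vertex `v^j(w)` (`1 ≤ j ≤ n+1`):
`v^{n+1}_i(w) = #({1,…,i-1} ∩ CDes(w⁻¹))` and `v^j = v^{j+1} + ½ e_{w_j}`. -/
noncomputable def vcoord (n : ℕ) (w : Equiv.Perm ℤ) (j : ℕ) (i : ℕ) : ℚ :=
  ((Finset.Icc (1 : ℤ) ((i : ℤ) - 1) ∩ cdesSet n w.symm).card : ℚ)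
    + (1 / 2) * ∑ m ∈ Finset.Icc (j : ℤ) (n : ℤ),
        (if w m = (i : ℤ) then (1 : ℚ) else if w m = -(i : ℤ) then -1 else 0)

/-- `u` is the image `τ_n(w)`: in window notation `u = 1 w'_1 ⋯ w'_n`, where
`w'_i = w_i + 1` if `w_i > 0` and `w'_i = w_i - 1` if `w_i < 0`. -/
def isTau (n : ℕ) (w u : Equiv.Perm ℤ) : Prop :=
  u 1 = 1 ∧ ∀ i : ℤ, 1 ≤ i → i ≤ (n : ℤ) →
    u (i + 1) = if 0 < w i then w i + 1 else w i - 1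

set_option maxHeartbeats 1000000

def zgg (n : ℕ) (x y : ℤ) : ℤ :=
  if 0 < x then
    if 0 < y then
      if y = x + 1 then x * (x + 1) - (n : ℤ) * ((n : ℤ) + 1) + 1
      else if x = y + 1 then 0
      else if x < y then 1 else 0
    else (if y = -(x + 1) then -1 else 0)
  else
    if 0 < y then (if x = -(y + 1) then 0 else 1)
    else
      if y = x + 1 then 0
      else if y = x - 1 then (n : ℤ) * ((n : ℤ) + 1) - 1 - x * (x - 1)
      else if x < y then 1 else 0

def zss (n : ℕ) (x : ℤ) : ℤ := if 0 < x then 0 else x * x - (n : ℤ) * ((n : ℤ) + 1) + 1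

lemma zL1 {n : ℕ} {a b : ℤ} (h : Lll a b) : zgg n b a - zgg n a b = -1 := by
  obtain ⟨c, hc0, hac, hcb⟩ := h
  simp only [zgg]
  split_ifs <;> first | (exfalso; omega) | omega | (subst_vars; ring)

lemma zfi {n : ℕ} {a m : ℤ} (ha : 2 ≤ a) (hm : 1 ≤ m) :
    zgg n (-a) m - zgg n a m =
      (if m < a then 1 else 0) + (if m = a - 1 then -1 else 0) + (if m = a then 1 else 0)
      + (if m = a + 1 then 1 - (a * (a + 1) - (n : ℤ) * ((n : ℤ) + 1) + 1) else 0) := by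
  simp only [zgg]
  split_ifs <;> first | (exfalso; omega) | omega | (subst_vars; ring)

lemma zfi' {n : ℕ} {a m : ℤ} (ha : 2 ≤ a) (hm : 1 ≤ m) (hma : m ≠ a) :
    zgg n (-a) (-m) - zgg n a (-m) =
      (if m < a then 1 else 0) + (if m = a - 1 then -1 else 0) + (if m = a then 1 else 0)
      + (if m = a + 1 then 1 - (a * (a + 1) - (n : ℤ) * ((n : ℤ) + 1) + 1) else 0) := by
  simp only [zgg]
  split_ifs <;> first | (exfalso; omega) | omega | (subst_vars; ring)

lemma zfc {n : ℕ} {c m : ℤ} (hc : 2 ≤ c) (hm : 1 ≤ m) :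
    zgg n m c - zgg n m (-c) =
      (if m < c then 1 else 0)
      + (if m = c - 1 then (c - 1) * c - (n : ℤ) * ((n : ℤ) + 1) + 1 else 0) := by
  simp only [zgg]
  split_ifs <;> first | (exfalso; omega) | omega | (subst_vars; ring)

lemma zfc' {n : ℕ} {c m : ℤ} (hc : 2 ≤ c) (hm : 1 ≤ m) (hmc : m ≠ c) :
    zgg n (-m) c - zgg n (-m) (-c) =
      (if m < c then 1 else 0)
      + (if m = c - 1 then (c - 1) * c - (n : ℤ) * ((n : ℤ) + 1) + 1 else 0) := by
  simp only [zgg]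
  split_ifs <;> first | (exfalso; omega) | omega | (subst_vars; ring)

noncomputable def zrho (n : ℕ) (w : Equiv.Perm ℤ) : ℤ :=
  (∑ p ∈ Finset.Icc (1 : ℤ) (n : ℤ), ∑ q ∈ Finset.Icc (1 : ℤ) (n : ℤ),
      if p < q then zgg n (w p) (w q) else 0)
    + ∑ p ∈ Finset.Icc (1 : ℤ) (n : ℤ), zss n (w p)

lemma zsp_zero {n : ℕ} {w : Equiv.Perm ℤ} (h : IsSignedPerm n w) : w 0 = 0 := by
  have := h.1 0; simp at this; omega

lemma zsp_ne {n : ℕ} {w : Equiv.Perm ℤ} (h : IsSignedPerm n w) {i : ℤ} (hi : i ≠ 0) :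
    w i ≠ 0 := by
  intro hc
  exact hi (w.injective (by rw [hc, zsp_zero h]))

lemma zsp_symm {n : ℕ} {w : Equiv.Perm ℤ} (h : IsSignedPerm n w) : IsSignedPerm n w.symm := by
  constructor
  · intro i
    apply w.injective
    rw [Equiv.apply_symm_apply]
    have := h.1 (w.symm i)
    rw [Equiv.apply_symm_apply] at this
    rw [this]
  · intro i hi
    have := h.2 i hi
    conv_lhs => rw [← this]
    exact Equiv.symm_apply_apply w i

lemma zsp_abs {n : ℕ} {w : Equiv.Perm ℤ} (h : IsSignedPerm n w) {i : ℤ}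
    (hle : |i| ≤ n) : |w i| ≤ n := by
  by_contra hc
  push_neg at hc
  have h2 := h.2 (w i) hc
  have h3 : w i = i := w.injective h2
  rw [h3] at hc
  omega

lemma zX_p {n : ℕ} {w : Equiv.Perm ℤ} (hn : 1 ≤ n) (h : InXn n w) :
    1 ≤ w.symm 1 ∧ w.symm 1 ≤ n ∧ w (w.symm 1) = 1 := by
  have hnn : (1 : ℤ) ≤ (n : ℤ) := by exact_mod_cast hn
  refine ⟨h.2, ?_, Equiv.apply_symm_apply w 1⟩
  by_contra hc
  push_neg at hc
  have habs : |w.symm 1| = w.symm 1 := abs_of_pos h.2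
  have h2 : w (w.symm 1) = w.symm 1 := h.1.2 (w.symm 1) (by omega)
  rw [Equiv.apply_symm_apply] at h2
  omega

lemma zmul_succ_nonneg (x : ℤ) : 0 ≤ x * (x + 1) := by
  rcases le_or_gt 0 x with h | h
  · exact mul_nonneg h (by omega)
  · have := mul_nonneg (show (0:ℤ) ≤ -x by omega) (show (0:ℤ) ≤ -(x+1) by omega)
    nlinarith [this]

lemma zgg_lb {n : ℕ} {x y : ℤ} (hn : 1 ≤ n) (hax : |x| ≤ n) :
    -((n : ℤ) * ((n : ℤ) + 1)) ≤ zgg n x y := by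
  have hb := abs_le.mp hax
  have hnn : (1 : ℤ) ≤ (n : ℤ) := by exact_mod_cast hn
  have hK : (1 : ℤ) ≤ (n : ℤ) * ((n : ℤ) + 1) := by nlinarith
  have h1 : 0 ≤ x * (x + 1) := zmul_succ_nonneg x
  have h2 : x * (x - 1) ≤ (n : ℤ) * ((n : ℤ) + 1) := by
    have := mul_nonneg (show (0:ℤ) ≤ (n : ℤ) + x by omega)
      (show (0:ℤ) ≤ (n : ℤ) - x + 1 by omega)
    nlinarith [this]
  simp only [zgg]
  split_ifs <;> linarith

lemma zss_lb {n : ℕ} {x : ℤ} (hn : 1 ≤ n) :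
    -((n : ℤ) * ((n : ℤ) + 1)) ≤ zss n x := by
  have hnn : (1 : ℤ) ≤ (n : ℤ) := by exact_mod_cast hn
  have hK : (1 : ℤ) ≤ (n : ℤ) * ((n : ℤ) + 1) := by nlinarith
  have h1 : 0 ≤ x * x := mul_self_nonneg x
  simp only [zss]
  split_ifs <;> linarith

def zBb (n : ℕ) : ℤ := ((n : ℤ) * n + n) * ((n : ℤ) * ((n : ℤ) + 1))

lemma zIcc_card (n : ℕ) : (Finset.Icc (1 : ℤ) (n : ℤ)).card = n := by
  rw [Int.card_Icc]; simp

lemma zabs_gt {n x : ℤ} (h : n < |x|) (hn : 0 ≤ n) : n < x ∨ x < -n := by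
  rcases le_or_gt 0 x with h1 | h1
  · rw [abs_of_nonneg h1] at h; omega
  · rw [abs_of_neg h1] at h; omega

lemma zmem_facts {n : ℕ} {p : ℤ} (hp : p ∈ Finset.Icc (1 : ℤ) (n : ℤ)) :
    1 ≤ p ∧ p ≤ n ∧ p ≠ 0 ∧ |p| ≤ n := by
  rw [Finset.mem_Icc] at hp
  refine ⟨hp.1, hp.2, by omega, by rw [abs_le]; omega⟩

lemma zrho_lb {n : ℕ} {w : Equiv.Perm ℤ} (hn : 1 ≤ n) (h : InXn n w) :
    -(zBb n) ≤ zrho n w := by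
  set K : ℤ := (n : ℤ) * ((n : ℤ) + 1) with hKdef
  have hnn : (1 : ℤ) ≤ (n : ℤ) := by exact_mod_cast hn
  have hK : (1 : ℤ) ≤ K := by rw [hKdef]; nlinarith
  have habs : ∀ p ∈ Finset.Icc (1 : ℤ) (n : ℤ), |w p| ≤ n := by
    intro p hp
    exact zsp_abs h.1 (zmem_facts hp).2.2.2
  have hinner : ∀ p ∈ Finset.Icc (1 : ℤ) (n : ℤ),
      -((n : ℤ) * K) ≤ ∑ q ∈ Finset.Icc (1 : ℤ) (n : ℤ),
        (if p < q then zgg n (w p) (w q) else 0) := by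
    intro p hp
    calc -((n : ℤ) * K) = (Finset.Icc (1 : ℤ) (n : ℤ)).card • (-K) := by
            rw [zIcc_card, nsmul_eq_mul]; push_cast; ring
      _ = ∑ _q ∈ Finset.Icc (1 : ℤ) (n : ℤ), (-K) := (Finset.sum_const _).symm
      _ ≤ _ := by
            apply Finset.sum_le_sum
            intro q hq
            by_cases hpq : p < q
            · simp only [hpq, if_true]
              exact zgg_lb hn (habs p hp)
            · simp only [hpq, if_false]
              omega
  have h1 : -((n : ℤ) * ((n : ℤ) * K)) ≤ ∑ p ∈ Finset.Icc (1 : ℤ) (n : ℤ),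
      ∑ q ∈ Finset.Icc (1 : ℤ) (n : ℤ), (if p < q then zgg n (w p) (w q) else 0) := by
    calc -((n : ℤ) * ((n : ℤ) * K)) = (Finset.Icc (1 : ℤ) (n : ℤ)).card • (-((n : ℤ) * K)) := by
          rw [zIcc_card, nsmul_eq_mul]; push_cast; ring
      _ = ∑ _p ∈ Finset.Icc (1 : ℤ) (n : ℤ), (-((n : ℤ) * K)) := (Finset.sum_const _).symm
      _ ≤ _ := Finset.sum_le_sum hinner
  have h2 : -((n : ℤ) * K) ≤ ∑ p ∈ Finset.Icc (1 : ℤ) (n : ℤ), zss n (w p) := by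
    calc -((n : ℤ) * K) = (Finset.Icc (1 : ℤ) (n : ℤ)).card • (-K) := by
          rw [zIcc_card, nsmul_eq_mul]; push_cast; ring
      _ = ∑ _p ∈ Finset.Icc (1 : ℤ) (n : ℤ), (-K) := (Finset.sum_const _).symm
      _ ≤ _ := Finset.sum_le_sum (fun p _ => zss_lb hn)
  have : -(zBb n) = -((n : ℤ) * ((n : ℤ) * K)) + -((n : ℤ) * K) := by
    rw [zBb, hKdef]; ring
  rw [zrho, this]
  exact add_le_add h1 h2

lemma zswap_neg (a x : ℤ) : Equiv.swap a (-a) (-x) = -(Equiv.swap a (-a) x) := by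
  simp only [Equiv.swap_apply_def]
  split_ifs <;> omega

lemma zswap2_neg {i : ℤ} (hi : 1 ≤ i) (x : ℤ) :
    (Equiv.swap i (i + 1) * Equiv.swap (-i) (-(i + 1))) (-x)
      = -((Equiv.swap i (i + 1) * Equiv.swap (-i) (-(i + 1))) x) := by
  simp only [Equiv.Perm.mul_apply, Equiv.swap_apply_def]
  split_ifs <;> first | omega | (simp only [neg_neg]; omega) | (exfalso; omega)

lemma zmove_signed {n : ℕ} {w σ : Equiv.Perm ℤ} (hw : IsSignedPerm n w)
    (hσ1 : ∀ x, σ (-x) = -(σ x)) (hσ2 : ∀ x, (n : ℤ) < |x| → σ x = x) :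
    IsSignedPerm n (w * σ) := by
  constructor
  · intro i
    rw [Equiv.Perm.mul_apply, Equiv.Perm.mul_apply, hσ1, hw.1]
  · intro i hi
    rw [Equiv.Perm.mul_apply, hσ2 i hi, hw.2 i hi]

lemma zmove1_mem {n : ℕ} {w : Equiv.Perm ℤ} (hn : 1 ≤ n) (hw : InXn n w) (ha : 2 ≤ w 1) :
    InXn n (w * Equiv.swap 1 (-1)) := by
  have hnn : (1 : ℤ) ≤ (n : ℤ) := by exact_mod_cast hn
  obtain ⟨hp1, hpn, hpv⟩ := zX_p hn hw
  constructor
  · apply zmove_signed hw.1 (zswap_neg 1)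
    intro x hx
    have hx2 := zabs_gt hx (by omega)
    exact Equiv.swap_apply_of_ne_of_ne (by omega) (by omega)
  · have hne : w.symm 1 ≠ 1 := by
      intro hc; rw [hc] at hpv; omega
    have hsymm : (w * Equiv.swap 1 (-1)).symm 1 = w.symm 1 := by
      rw [Equiv.symm_apply_eq, Equiv.Perm.mul_apply,
        Equiv.swap_apply_of_ne_of_ne hne (by omega), Equiv.apply_symm_apply]
    rw [hsymm]; exact hw.2

lemma zmove3_mem {n : ℕ} {w : Equiv.Perm ℤ} (hn : 1 ≤ n) (hw : InXn n w)
    (hc : w (n : ℤ) ≤ -2) : InXn n (w * Equiv.swap (n : ℤ) (-(n : ℤ))) := by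
  have hnn : (1 : ℤ) ≤ (n : ℤ) := by exact_mod_cast hn
  obtain ⟨hp1, hpn, hpv⟩ := zX_p hn hw
  constructor
  · apply zmove_signed hw.1 (zswap_neg (n : ℤ))
    intro x hx
    have hx2 := zabs_gt hx (by omega)
    exact Equiv.swap_apply_of_ne_of_ne (by omega) (by omega)
  · have hne : w.symm 1 ≠ (n : ℤ) := by
      intro hcc; rw [hcc] at hpv; omega
    have hsymm : (w * Equiv.swap (n : ℤ) (-(n : ℤ))).symm 1 = w.symm 1 := by
      rw [Equiv.symm_apply_eq, Equiv.Perm.mul_apply,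
        Equiv.swap_apply_of_ne_of_ne hne (by omega), Equiv.apply_symm_apply]
    rw [hsymm]; exact hw.2

lemma zmove2_mem {n : ℕ} {w : Equiv.Perm ℤ} {i : ℤ} (hn : 1 ≤ n) (hw : InXn n w)
    (hi : 1 ≤ i) (hin : i ≤ (n : ℤ) - 1) :
    InXn n (w * (Equiv.swap i (i + 1) * Equiv.swap (-i) (-(i + 1)))) := by
  have hnn : (1 : ℤ) ≤ (n : ℤ) := by exact_mod_cast hn
  obtain ⟨hp1, hpn, hpv⟩ := zX_p hn hw
  set p := w.symm 1 with hpdef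
  constructor
  · apply zmove_signed hw.1 (zswap2_neg hi)
    intro x hx
    have hx2 := zabs_gt hx (by omega)
    rw [Equiv.Perm.mul_apply,
      Equiv.swap_apply_of_ne_of_ne (show x ≠ -i by omega) (show x ≠ -(i+1) by omega),
      Equiv.swap_apply_of_ne_of_ne (show x ≠ i by omega) (show x ≠ i+1 by omega)]
  · set v : ℤ := if p = i then i + 1 else if p = i + 1 then i else p with hvdef
    have hσv : (Equiv.swap i (i + 1) * Equiv.swap (-i) (-(i + 1))) v = p := by
      have hvpos : 1 ≤ v := by rw [hvdef]; split_ifs <;> omega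
      rw [Equiv.Perm.mul_apply,
        Equiv.swap_apply_of_ne_of_ne (show v ≠ -i by omega) (show v ≠ -(i+1) by omega)]
      rw [hvdef]
      split_ifs with h1 h2
      · rw [Equiv.swap_apply_right]; omega
      · rw [Equiv.swap_apply_left]; omega
      · rw [Equiv.swap_apply_of_ne_of_ne h1 h2]
    have hsymm : (w * (Equiv.swap i (i + 1) * Equiv.swap (-i) (-(i + 1)))).symm 1 = v := by
      rw [Equiv.symm_apply_eq, Equiv.Perm.mul_apply, hσv, hpdef, Equiv.apply_symm_apply]
    rw [hsymm, hvdef]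
    split_ifs <;> omega

lemma zabs_cases {x m : ℤ} (h : |x| = m) : x = m ∨ x = -m := by
  rcases le_or_gt 0 x with h1 | h1
  · left; rw [abs_of_nonneg h1] at h; omega
  · right; rw [abs_of_neg h1] at h; omega

lemma zabs_pos_facts {x : ℤ} (hx : x ≠ 0) : 1 ≤ |x| := by
  rcases le_or_gt 0 x with h1 | h1
  · rw [abs_of_nonneg h1]; omega
  · rw [abs_of_neg h1]; omega

/-- Generic reindexing of a position sum into a value sum via absolute values. -/
lemma zsum_abs_reindex {n : ℕ} {w : Equiv.Perm ℤ} (hw : IsSignedPerm n w)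
    (S T : Finset ℤ) (hS : ∀ q ∈ S, 1 ≤ q ∧ q ≤ n) (hT : ∀ m ∈ T, 1 ≤ m ∧ m ≤ n)
    (hST : ∀ q : ℤ, 1 ≤ q → q ≤ n → (q ∈ S ↔ |w q| ∈ T))
    (f : ℤ → ℤ) (hf : ∀ q ∈ S, f (w q) = f (|w q|)) :
    ∑ q ∈ S, f (w q) = ∑ m ∈ T, f m := by
  have hsym := zsp_symm hw
  have habs : ∀ m ∈ T, |w (|w.symm m|)| = m := by
    intro m hm
    obtain ⟨hm1, hm2⟩ := hT m hm
    rcases le_or_gt 0 (w.symm m) with h | h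
    · rw [abs_of_nonneg h, Equiv.apply_symm_apply, abs_of_nonneg (by omega)]
    · rw [abs_of_neg h, ← hsym.1 m, Equiv.apply_symm_apply, abs_of_nonpos (by omega)]
      ring
  have hmemS : ∀ m ∈ T, |w.symm m| ∈ S := by
    intro m hm
    obtain ⟨hm1, hm2⟩ := hT m hm
    have hm0 : m ≠ 0 := by omega
    have h1 : 1 ≤ |w.symm m| := zabs_pos_facts (zsp_ne hsym hm0)
    have h2 : |w.symm m| ≤ n := zsp_abs hsym (by rw [abs_le]; omega)
    rw [hST _ h1 h2, habs m hm]
    exact hm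
  apply Finset.sum_nbij' (i := fun q => |w q|) (j := fun m => |w.symm m|)
  · intro q hq
    exact (hST q (hS q hq).1 (hS q hq).2).mp hq
  · exact hmemS
  · intro q hq
    obtain ⟨hq1, hq2⟩ := hS q hq
    rcases le_or_gt 0 (w q) with h | h
    · rw [abs_of_nonneg h, Equiv.symm_apply_apply, abs_of_nonneg (by omega)]
    · have h2 : w.symm (-(w q)) = -q := by
        rw [hsym.1 (w q), Equiv.symm_apply_apply]
      rw [abs_of_neg h, h2, abs_neg, abs_of_nonneg (by omega)]
  · exact fun m hm => habs m hm
  · exact hf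

/-- evaluation of the value sum for move (i) -/
lemma zsum_eval1 {n : ℕ} {a : ℤ} (ha : 2 ≤ a) (han : a ≤ n) :
    zss n (-a) - zss n a
      + ∑ m ∈ (Finset.Icc (1 : ℤ) (n : ℤ)).erase a, (zgg n (-a) m - zgg n a m) = -1 := by
  have hmem : a ∈ Finset.Icc (1 : ℤ) (n : ℤ) := by rw [Finset.mem_Icc]; omega
  rw [Finset.sum_erase_eq_sub hmem]
  have hsum : ∑ m ∈ Finset.Icc (1 : ℤ) (n : ℤ), (zgg n (-a) m - zgg n a m)
      = ∑ m ∈ Finset.Icc (1 : ℤ) (n : ℤ),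
          ((if m < a then (1:ℤ) else 0) + (if m = a - 1 then -1 else 0)
            + (if m = a then 1 else 0)
            + (if m = a + 1 then 1 - (a * (a + 1) - (n : ℤ) * ((n : ℤ) + 1) + 1) else 0)) := by
    apply Finset.sum_congr rfl
    intro m hm
    rw [Finset.mem_Icc] at hm
    exact zfi ha hm.1
  rw [hsum]
  have e1 : ∑ m ∈ Finset.Icc (1 : ℤ) (n : ℤ), (if m < a then (1:ℤ) else 0) = a - 1 := by
    rw [Finset.sum_boole]
    have : (Finset.Icc (1 : ℤ) (n : ℤ)).filter (fun m => m < a) = Finset.Icc 1 (a - 1) := by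
      ext x
      simp only [Finset.mem_filter, Finset.mem_Icc]
      omega
    rw [this, Int.card_Icc]
    omega
  have e2 : ∑ m ∈ Finset.Icc (1 : ℤ) (n : ℤ), (if m = a - 1 then (-1 : ℤ) else 0) = -1 := by
    rw [Finset.sum_ite_eq' (Finset.Icc (1 : ℤ) (n : ℤ)) (a - 1) (fun _ => (-1 : ℤ))]
    rw [if_pos (by rw [Finset.mem_Icc]; omega)]
  have e3 : ∑ m ∈ Finset.Icc (1 : ℤ) (n : ℤ), (if m = a then (1 : ℤ) else 0) = 1 := by
    rw [Finset.sum_ite_eq' (Finset.Icc (1 : ℤ) (n : ℤ)) a (fun _ => (1 : ℤ))]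
    rw [if_pos hmem]
  have e4 : ∑ m ∈ Finset.Icc (1 : ℤ) (n : ℤ),
      (if m = a + 1 then 1 - (a * (a + 1) - (n : ℤ) * ((n : ℤ) + 1) + 1) else 0)
      = if a + 1 ≤ n then 1 - (a * (a + 1) - (n : ℤ) * ((n : ℤ) + 1) + 1) else 0 := by
    rw [Finset.sum_ite_eq' (Finset.Icc (1 : ℤ) (n : ℤ)) (a + 1) _]
    congr 1
    rw [Finset.mem_Icc]
    simp only [eq_iff_iff]
    constructor
    · intro h; omega
    · intro h; omega
  have efa : zgg n (-a) a - zgg n a a = 1 := by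
    rw [zfi ha (by omega)]
    split_ifs <;> first | (exfalso; omega) | omega
  simp only [Finset.sum_add_distrib, e1, e2, e3, e4, efa]
  have hza : zss n a = 0 := by rw [zss, if_pos (by omega)]
  have hzna : zss n (-a) = a * a - (n : ℤ) * ((n : ℤ) + 1) + 1 := by
    rw [zss, if_neg (by omega)]; ring_nf
  rw [hza, hzna]
  rcases lt_or_ge (a + 1) ((n : ℤ) + 1) with h | h
  · rw [if_pos (by omega)]; ring
  · rw [if_neg (by omega)]
    have : a = n := by omega
    subst this
    ring

/-- evaluation of the value sum for move (iii) -/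
lemma zsum_eval3 {n : ℕ} {c : ℤ} (hc : 2 ≤ c) (hcn : c ≤ n) :
    zss n c - zss n (-c)
      + ∑ m ∈ (Finset.Icc (1 : ℤ) (n : ℤ)).erase c, (zgg n m c - zgg n m (-c)) = -1 := by
  have hmem : c ∈ Finset.Icc (1 : ℤ) (n : ℤ) := by rw [Finset.mem_Icc]; omega
  rw [Finset.sum_erase_eq_sub hmem]
  have hsum : ∑ m ∈ Finset.Icc (1 : ℤ) (n : ℤ), (zgg n m c - zgg n m (-c))
      = ∑ m ∈ Finset.Icc (1 : ℤ) (n : ℤ),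
          ((if m < c then (1:ℤ) else 0)
            + (if m = c - 1 then (c - 1) * c - (n : ℤ) * ((n : ℤ) + 1) + 1 else 0)) := by
    apply Finset.sum_congr rfl
    intro m hm
    rw [Finset.mem_Icc] at hm
    exact zfc hc hm.1
  rw [hsum]
  have e1 : ∑ m ∈ Finset.Icc (1 : ℤ) (n : ℤ), (if m < c then (1:ℤ) else 0) = c - 1 := by
    rw [Finset.sum_boole]
    have : (Finset.Icc (1 : ℤ) (n : ℤ)).filter (fun m => m < c) = Finset.Icc 1 (c - 1) := by
      ext x
      simp only [Finset.mem_filter, Finset.mem_Icc]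
      omega
    rw [this, Int.card_Icc]
    omega
  have e2 : ∑ m ∈ Finset.Icc (1 : ℤ) (n : ℤ),
      (if m = c - 1 then (c - 1) * c - (n : ℤ) * ((n : ℤ) + 1) + 1 else 0)
      = (c - 1) * c - (n : ℤ) * ((n : ℤ) + 1) + 1 := by
    rw [Finset.sum_ite_eq' (Finset.Icc (1 : ℤ) (n : ℤ)) (c - 1) _]
    rw [if_pos (by rw [Finset.mem_Icc]; omega)]
  have efc : zgg n c c - zgg n c (-c) = 0 := by
    rw [zfc hc (by omega)]
    split_ifs <;> first | (exfalso; omega) | omega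
  simp only [Finset.sum_add_distrib, e1, e2, efc]
  have hzc : zss n c = 0 := by rw [zss, if_pos (by omega)]
  have hznc : zss n (-c) = c * c - (n : ℤ) * ((n : ℤ) + 1) + 1 := by
    rw [zss, if_neg (by omega)]; ring_nf
  rw [hzc, hznc]
  ring

lemma zrho_move1 {n : ℕ} {w u : Equiv.Perm ℤ} (hn : 1 ≤ n) (hw : InXn n w)
    (ha : 2 ≤ w 1) (hue : u = w * Equiv.swap 1 (-1)) :
    zrho n u = zrho n w - 1 := by
  have hnn : (1 : ℤ) ≤ (n : ℤ) := by exact_mod_cast hn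
  set a := w 1 with hadef
  have han : a ≤ n := by
    have := zsp_abs hw.1 (show |(1:ℤ)| ≤ (n:ℤ) by rw [abs_le]; omega)
    rw [abs_le] at this; omega
  have huq : ∀ q : ℤ, 2 ≤ q → u q = w q := by
    intro q hq
    rw [hue, Equiv.Perm.mul_apply,
      Equiv.swap_apply_of_ne_of_ne (by omega) (by omega)]
  have hu1 : u 1 = -a := by
    rw [hue, Equiv.Perm.mul_apply, Equiv.swap_apply_left, hadef, ← hw.1.1 1]
  have h1mem : (1 : ℤ) ∈ Finset.Icc (1 : ℤ) (n : ℤ) := by rw [Finset.mem_Icc]; omega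
  -- pairs difference
  have hpair : (∑ p ∈ Finset.Icc (1 : ℤ) (n : ℤ), ∑ q ∈ Finset.Icc (1 : ℤ) (n : ℤ),
        if p < q then zgg n (u p) (u q) else 0)
      - (∑ p ∈ Finset.Icc (1 : ℤ) (n : ℤ), ∑ q ∈ Finset.Icc (1 : ℤ) (n : ℤ),
        if p < q then zgg n (w p) (w q) else 0)
      = ∑ q ∈ Finset.Icc (1 : ℤ) (n : ℤ),
          (if 1 < q then zgg n (-a) (w q) - zgg n a (w q) else 0) := by
    rw [← Finset.sum_sub_distrib]
    rw [Finset.sum_eq_single_of_mem (1 : ℤ) h1mem]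
    · rw [← Finset.sum_sub_distrib]
      apply Finset.sum_congr rfl
      intro q hq
      by_cases h1q : 1 < q
      · simp only [if_pos h1q]
        rw [hu1, huq q (by omega)]
      · simp only [if_neg h1q]; ring
    · intro p hp hpne
      rw [Finset.mem_Icc] at hp
      have hp2 : 2 ≤ p := by omega
      rw [sub_eq_zero]
      apply Finset.sum_congr rfl
      intro q hq
      by_cases hpq : p < q
      · simp only [if_pos hpq]
        rw [huq p hp2, huq q (by omega)]
      · simp only [if_neg hpq]
  -- singles difference
  have hsing : (∑ p ∈ Finset.Icc (1 : ℤ) (n : ℤ), zss n (u p))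
      - (∑ p ∈ Finset.Icc (1 : ℤ) (n : ℤ), zss n (w p))
      = zss n (-a) - zss n a := by
    rw [← Finset.sum_sub_distrib]
    rw [Finset.sum_eq_single_of_mem (1 : ℤ) h1mem]
    · rw [hu1]
    · intro p hp hpne
      rw [Finset.mem_Icc] at hp
      rw [huq p (by omega), sub_self]
  -- convert ite sum to Icc 2 n
  have hconv : ∑ q ∈ Finset.Icc (1 : ℤ) (n : ℤ),
        (if 1 < q then zgg n (-a) (w q) - zgg n a (w q) else 0)
      = ∑ q ∈ Finset.Icc (2 : ℤ) (n : ℤ), (zgg n (-a) (w q) - zgg n a (w q)) := by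
    rw [← Finset.sum_filter]
    apply Finset.sum_congr
    · ext x
      simp only [Finset.mem_filter, Finset.mem_Icc]
      omega
    · intros; rfl
  -- reindex to value sum
  have hreindex : ∑ q ∈ Finset.Icc (2 : ℤ) (n : ℤ), (zgg n (-a) (w q) - zgg n a (w q))
      = ∑ m ∈ (Finset.Icc (1 : ℤ) (n : ℤ)).erase a, (zgg n (-a) m - zgg n a m) := by
    apply zsum_abs_reindex hw.1 (f := fun x => zgg n (-a) x - zgg n a x)
    · intro q hq; rw [Finset.mem_Icc] at hq; exact ⟨by omega, hq.2⟩
    · intro m hm; rw [Finset.mem_erase, Finset.mem_Icc] at hm; exact ⟨hm.2.1, hm.2.2⟩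
    · intro q hq1 hq2
      have hq0 : q ≠ 0 := by omega
      have hb1 : 1 ≤ |w q| := zabs_pos_facts (zsp_ne hw.1 hq0)
      have hb2 : |w q| ≤ n := zsp_abs hw.1 (by rw [abs_le]; omega)
      rw [Finset.mem_Icc, Finset.mem_erase, Finset.mem_Icc]
      constructor
      · intro hq
        refine ⟨?_, hb1, hb2⟩
        intro hc
        rcases zabs_cases hc with h | h
        · have := w.injective (h.trans hadef); omega
        · have hwm : w (-1) = -a := by rw [hadef, ← hw.1.1 1]
          have := w.injective (h.trans hwm.symm); omega
      · intro ⟨hne, _, _⟩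
        constructor
        · -- show 2 ≤ q, i.e. q ≠ 1
          by_contra hcc
          have hq1' : q = 1 := by omega
          apply hne
          rw [hq1', ← hadef, abs_of_pos (by omega)]
        · omega
    · intro q hq
      rw [Finset.mem_Icc] at hq
      rcases le_or_gt 0 (w q) with h | h
      · rw [abs_of_nonneg h]
      · rw [abs_of_neg h]
        have hm1 : 1 ≤ -(w q) := by
          have := zsp_ne hw.1 (show q ≠ 0 by omega); omega
        have hma : -(w q) ≠ a := by
          intro hc
          have hwm : w (-1) = -a := by rw [hadef, ← hw.1.1 1]
          have : w q = w (-1) := by omega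
          have := w.injective this; omega
        have e1 := zfi' (n := n) (a := a) (m := -(w q)) ha hm1 hma
        have e2 := zfi (n := n) (a := a) (m := -(w q)) ha hm1
        simp only [neg_neg] at e1
        rw [e1, e2]
  have heval := zsum_eval1 (n := n) ha han
  have hrw : zrho n u - zrho n w = -1 := by
    rw [zrho, zrho]
    have := hpair
    have := hsing
    have := hconv
    have := hreindex
    linarith [hpair, hsing]
  linarith [hrw]

lemma zrho_move3 {n : ℕ} {w u : Equiv.Perm ℤ} (hn : 1 ≤ n) (hw : InXn n w)
    (hc : w (n : ℤ) ≤ -2) (hue : u = w * Equiv.swap (n : ℤ) (-(n : ℤ))) :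
    zrho n u = zrho n w - 1 := by
  have hnn : (1 : ℤ) ≤ (n : ℤ) := by exact_mod_cast hn
  set c : ℤ := -(w (n : ℤ)) with hcdef
  have hc2 : 2 ≤ c := by omega
  have hwn : w (n : ℤ) = -c := by omega
  have hcn : c ≤ n := by
    have := zsp_abs hw.1 (show |(n:ℤ)| ≤ (n:ℤ) by rw [abs_le]; omega)
    rw [abs_le] at this; omega
  have huq : ∀ q : ℤ, 1 ≤ q → q ≤ (n : ℤ) - 1 → u q = w q := by
    intro q hq1 hq2
    rw [hue, Equiv.Perm.mul_apply,
      Equiv.swap_apply_of_ne_of_ne (by omega) (by omega)]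
  have hun : u (n : ℤ) = c := by
    rw [hue, Equiv.Perm.mul_apply, Equiv.swap_apply_left, hw.1.1 (n : ℤ), hwn]
    ring
  have hnmem : (n : ℤ) ∈ Finset.Icc (1 : ℤ) (n : ℤ) := by rw [Finset.mem_Icc]; omega
  -- pairs difference
  have hpair : (∑ p ∈ Finset.Icc (1 : ℤ) (n : ℤ), ∑ q ∈ Finset.Icc (1 : ℤ) (n : ℤ),
        if p < q then zgg n (u p) (u q) else 0)
      - (∑ p ∈ Finset.Icc (1 : ℤ) (n : ℤ), ∑ q ∈ Finset.Icc (1 : ℤ) (n : ℤ),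
        if p < q then zgg n (w p) (w q) else 0)
      = ∑ p ∈ Finset.Icc (1 : ℤ) (n : ℤ),
          (if p < (n : ℤ) then zgg n (w p) c - zgg n (w p) (-c) else 0) := by
    rw [← Finset.sum_sub_distrib]
    apply Finset.sum_congr rfl
    intro p hp
    rw [Finset.mem_Icc] at hp
    by_cases hpn : p < (n : ℤ)
    · rw [if_pos hpn, ← Finset.sum_sub_distrib]
      rw [Finset.sum_eq_single_of_mem (n : ℤ) hnmem]
      · rw [if_pos hpn, if_pos hpn, hun, huq p hp.1 (by omega), hwn]
      · intro q hq hqne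
        rw [Finset.mem_Icc] at hq
        by_cases hpq : p < q
        · simp only [if_pos hpq]
          rw [huq p hp.1 (by omega), huq q hq.1 (by omega), sub_self]
        · simp only [if_neg hpq, sub_self]
    · rw [if_neg hpn]
      have hpn' : p = (n : ℤ) := by omega
      rw [sub_eq_zero]
      apply Finset.sum_congr rfl
      intro q hq
      rw [Finset.mem_Icc] at hq
      have : ¬ p < q := by omega
      simp only [if_neg this]
  -- singles difference
  have hsing : (∑ p ∈ Finset.Icc (1 : ℤ) (n : ℤ), zss n (u p))
      - (∑ p ∈ Finset.Icc (1 : ℤ) (n : ℤ), zss n (w p))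
      = zss n c - zss n (-c) := by
    rw [← Finset.sum_sub_distrib]
    rw [Finset.sum_eq_single_of_mem (n : ℤ) hnmem]
    · rw [hun, hwn]
    · intro p hp hpne
      rw [Finset.mem_Icc] at hp
      rw [huq p hp.1 (by omega), sub_self]
  -- convert to Icc 1 (n-1)
  have hconv : ∑ p ∈ Finset.Icc (1 : ℤ) (n : ℤ),
        (if p < (n : ℤ) then zgg n (w p) c - zgg n (w p) (-c) else 0)
      = ∑ p ∈ Finset.Icc (1 : ℤ) ((n : ℤ) - 1), (zgg n (w p) c - zgg n (w p) (-c)) := by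
    rw [← Finset.sum_filter]
    apply Finset.sum_congr
    · ext x
      simp only [Finset.mem_filter, Finset.mem_Icc]
      omega
    · intros; rfl
  -- reindex
  have hreindex : ∑ p ∈ Finset.Icc (1 : ℤ) ((n : ℤ) - 1), (zgg n (w p) c - zgg n (w p) (-c))
      = ∑ m ∈ (Finset.Icc (1 : ℤ) (n : ℤ)).erase c, (zgg n m c - zgg n m (-c)) := by
    apply zsum_abs_reindex hw.1 (f := fun x => zgg n x c - zgg n x (-c))
    · intro q hq; rw [Finset.mem_Icc] at hq; exact ⟨hq.1, by omega⟩
    · intro m hm; rw [Finset.mem_erase, Finset.mem_Icc] at hm; exact ⟨hm.2.1, hm.2.2⟩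
    · intro q hq1 hq2
      have hq0 : q ≠ 0 := by omega
      have hb1 : 1 ≤ |w q| := zabs_pos_facts (zsp_ne hw.1 hq0)
      have hb2 : |w q| ≤ n := zsp_abs hw.1 (by rw [abs_le]; omega)
      rw [Finset.mem_Icc, Finset.mem_erase, Finset.mem_Icc]
      constructor
      · intro hq
        refine ⟨?_, hb1, hb2⟩
        intro hcc
        rcases zabs_cases hcc with h | h
        · have hwm : w (-(n : ℤ)) = c := by rw [hw.1.1 (n : ℤ), hwn]; ring
          have := w.injective (h.trans hwm.symm); omega
        · have : w q = w (n : ℤ) := by omega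
          have := w.injective this; omega
      · intro ⟨hne, _, _⟩
        constructor
        · omega
        · -- q ≤ n - 1, i.e. q ≠ n
          by_contra hcc
          have hqn : q = (n : ℤ) := by omega
          apply hne
          rw [hqn, hwn, abs_of_neg (by omega)]
          ring
    · intro q hq
      rw [Finset.mem_Icc] at hq
      rcases le_or_gt 0 (w q) with h | h
      · rw [abs_of_nonneg h]
      · rw [abs_of_neg h]
        have hm1 : 1 ≤ -(w q) := by
          have := zsp_ne hw.1 (show q ≠ 0 by omega); omega
        have hmc : -(w q) ≠ c := by
          intro hcc
          have : w q = w (n : ℤ) := by omega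
          have := w.injective this; omega
        have e1 := zfc' (n := n) (c := c) (m := -(w q)) hc2 hm1 hmc
        have e2 := zfc (n := n) (c := c) (m := -(w q)) hc2 hm1
        simp only [neg_neg] at e1
        rw [e1, e2]
  have heval := zsum_eval3 (n := n) hc2 hcn
  have hrw : zrho n u - zrho n w = -1 := by
    rw [zrho, zrho]
    linarith [hpair, hsing]
  linarith [hrw]

lemma zrho_move2 {n : ℕ} {w u : Equiv.Perm ℤ} {i : ℤ} (hn : 1 ≤ n) (hw : InXn n w)
    (hi : 1 ≤ i) (hin : i ≤ (n : ℤ) - 1) (hL : Lll (w i) (w (i + 1)))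
    (hue : u = w * (Equiv.swap i (i + 1) * Equiv.swap (-i) (-(i + 1)))) :
    zrho n u = zrho n w - 1 := by
  have hnn : (1 : ℤ) ≤ (n : ℤ) := by exact_mod_cast hn
  set σ := Equiv.swap i (i + 1) with hσdef
  set I := Finset.Icc (1 : ℤ) (n : ℤ) with hIdef
  have huσ : ∀ p : ℤ, 1 ≤ p → u p = w (σ p) := by
    intro p hp
    rw [hue, Equiv.Perm.mul_apply, Equiv.Perm.mul_apply,
      Equiv.swap_apply_of_ne_of_ne (show p ≠ -i by omega) (show p ≠ -(i+1) by omega)]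
  have hσσ : ∀ p : ℤ, σ (σ p) = p := fun p => Equiv.swap_apply_self i (i + 1) p
  have hσmem : ∀ p ∈ I, σ p ∈ I := by
    intro p hp
    rw [hIdef, Finset.mem_Icc] at hp ⊢
    rw [hσdef, Equiv.swap_apply_def]
    split_ifs <;> omega
  -- singles
  have hsing : ∑ p ∈ I, zss n (u p) = ∑ p ∈ I, zss n (w p) := by
    apply Finset.sum_nbij' (i := fun p => σ p) (j := fun p => σ p)
      hσmem hσmem
    · intro p _; exact hσσ p
    · intro p _; exact hσσ p
    · intro p hp
      rw [hIdef, Finset.mem_Icc] at hp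
      rw [huσ p hp.1]
  -- pairs
  have hprod_u : ∑ p ∈ I, ∑ q ∈ I, (if p < q then zgg n (u p) (u q) else 0)
      = ∑ x ∈ I ×ˢ I, (if x.1 < x.2 then zgg n (u x.1) (u x.2) else 0) :=
    (Finset.sum_product (s := I) (t := I)
      (f := fun x => if x.1 < x.2 then zgg n (u x.1) (u x.2) else 0)).symm
  have hprod_w : ∑ p ∈ I, ∑ q ∈ I, (if p < q then zgg n (w p) (w q) else 0)
      = ∑ x ∈ I ×ˢ I, (if x.1 < x.2 then zgg n (w x.1) (w x.2) else 0) :=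
    (Finset.sum_product (s := I) (t := I)
      (f := fun x => if x.1 < x.2 then zgg n (w x.1) (w x.2) else 0)).symm
  have hre : ∑ x ∈ I ×ˢ I, (if x.1 < x.2 then zgg n (u x.1) (u x.2) else 0)
      = ∑ x ∈ I ×ˢ I, (if σ x.1 < σ x.2 then zgg n (w x.1) (w x.2) else 0) := by
    apply Finset.sum_nbij' (i := fun x => (σ x.1, σ x.2)) (j := fun x => (σ x.1, σ x.2))
    · intro x hx
      rw [Finset.mem_product] at hx ⊢
      exact ⟨hσmem _ hx.1, hσmem _ hx.2⟩
    · intro x hx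
      rw [Finset.mem_product] at hx ⊢
      exact ⟨hσmem _ hx.1, hσmem _ hx.2⟩
    · intro x _; simp only [hσσ]
    · intro x _; simp only [hσσ]
    · intro x hx
      rw [Finset.mem_product, hIdef, Finset.mem_Icc, Finset.mem_Icc] at hx
      simp only [hσσ]
      rw [huσ x.1 hx.1.1, huσ x.2 hx.2.1]
  have hsub : ({((i : ℤ), i + 1), (i + 1, i)} : Finset (ℤ × ℤ)) ⊆ I ×ˢ I := by
    intro x hx
    simp only [Finset.mem_insert, Finset.mem_singleton] at hx
    rw [Finset.mem_product, hIdef, Finset.mem_Icc, Finset.mem_Icc]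
    rcases hx with h | h <;> rw [h] <;> constructor <;> constructor <;> omega
  have hzero : ∀ x ∈ I ×ˢ I, x ∉ ({((i : ℤ), i + 1), (i + 1, i)} : Finset (ℤ × ℤ)) →
      (if σ x.1 < σ x.2 then zgg n (w x.1) (w x.2) else 0)
        - (if x.1 < x.2 then zgg n (w x.1) (w x.2) else 0) = 0 := by
    intro x _ hx
    simp only [Finset.mem_insert, Finset.mem_singleton, Prod.ext_iff, not_or, not_and] at hx
    have hiff : (σ x.1 < σ x.2) ↔ (x.1 < x.2) := by
      rw [hσdef]
      simp only [Equiv.swap_apply_def]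
      split_ifs <;> omega
    rw [if_congr hiff rfl rfl, sub_self]
  have hpairdiff : ∑ x ∈ I ×ˢ I, (if σ x.1 < σ x.2 then zgg n (w x.1) (w x.2) else 0)
      - ∑ x ∈ I ×ˢ I, (if x.1 < x.2 then zgg n (w x.1) (w x.2) else 0) = -1 := by
    rw [← Finset.sum_sub_distrib]
    rw [← Finset.sum_subset hsub hzero]
    have hne : ((i : ℤ), i + 1) ∉ ({((i : ℤ) + 1, i)} : Finset (ℤ × ℤ)) := by
      simp only [Finset.mem_singleton, Prod.ext_iff]
      omega
    rw [show ({((i : ℤ), i + 1), (i + 1, i)} : Finset (ℤ × ℤ))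
        = insert ((i : ℤ), i + 1) {((i : ℤ) + 1, i)} from rfl]
    rw [Finset.sum_insert hne, Finset.sum_singleton]
    have hσi : σ i = i + 1 := Equiv.swap_apply_left i (i + 1)
    have hσi1 : σ (i + 1) = i := Equiv.swap_apply_right i (i + 1)
    simp only [hσi, hσi1]
    rw [if_neg (by omega : ¬ (i + 1 < i)), if_pos (by omega : i < i + 1),
      if_pos (by omega : i < i + 1), if_neg (by omega : ¬ (i + 1 < i))]
    have := zL1 (n := n) hL
    linarith
  rw [zrho, zrho, hprod_u, hprod_w, hre, hsing]
  linarith [hpairdiff]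

lemma zrho_covRel {n : ℕ} {u w : Equiv.Perm ℤ} (hn : 1 ≤ n) (h : covRel n u w) :
    zrho n u = zrho n w - 1 := by
  obtain ⟨hu, hw, hcase⟩ := h
  rcases hcase with ⟨ha, hue⟩ | ⟨i, hi, hin, hL, hue⟩ | ⟨hc, hue⟩
  · exact zrho_move1 hn hw ha hue
  · exact zrho_move2 hn hw hi hin hL hue
  · exact zrho_move3 hn hw hc hue

lemma zrtg {n : ℕ} (hn : 1 ≤ n) {u w : Equiv.Perm ℤ}
    (h : Relation.ReflTransGen (covRel n) u w) :
    zrho n u ≤ zrho n w ∧ (zrho n u = zrho n w → u = w) := by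
  induction h with
  | refl => exact ⟨le_rfl, fun _ => rfl⟩
  | tail hab hbc ih =>
    have h2 := zrho_covRel hn hbc
    obtain ⟨h1, _⟩ := ih
    exact ⟨by omega, fun heq => absurd heq (by omega)⟩

lemma zexists_pred {n : ℕ} {w : Equiv.Perm ℤ} (hn : 1 ≤ n) (hw : InXn n w)
    (hne : w ≠ 1) : ∃ u, covRel n u w := by
  have hnn : (1 : ℤ) ≤ (n : ℤ) := by exact_mod_cast hn
  by_cases h1 : 2 ≤ w 1
  · exact ⟨w * Equiv.swap 1 (-1), zmove1_mem hn hw h1, hw, Or.inl ⟨h1, rfl⟩⟩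
  by_cases h3 : w (n : ℤ) ≤ -2
  · exact ⟨w * Equiv.swap (n : ℤ) (-(n : ℤ)), zmove3_mem hn hw h3, hw,
      Or.inr (Or.inr ⟨h3, rfl⟩)⟩
  by_cases h2 : ∃ i : ℤ, 1 ≤ i ∧ i ≤ (n : ℤ) - 1 ∧ Lll (w i) (w (i + 1))
  · obtain ⟨i, hi, hin, hL⟩ := h2
    exact ⟨_, zmove2_mem hn hw hi hin, hw, Or.inr (Or.inl ⟨i, hi, hin, hL, rfl⟩)⟩
  exfalso; apply hne
  push_neg at h1 h3 h2
  obtain ⟨hp1, hpn, hpv⟩ := zX_p hn hw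
  set p := w.symm 1 with hpdef
  -- positivity of the window
  have hpos : ∀ q : ℤ, 1 ≤ q → q ≤ n → 0 < w q := by
    by_contra hcc
    push_neg at hcc
    obtain ⟨q0, hq01, hq0n, hq0w⟩ := hcc
    set Sg := (Finset.Icc (1 : ℤ) (n : ℤ)).filter (fun q => w q < 0) with hSdef
    have hq0m : q0 ∈ Sg := by
      rw [hSdef, Finset.mem_filter, Finset.mem_Icc]
      have := zsp_ne hw.1 (show q0 ≠ 0 by omega)
      exact ⟨⟨hq01, hq0n⟩, by omega⟩
    have hSne : Sg.Nonempty := ⟨q0, hq0m⟩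
    have hqm := Sg.max'_mem hSne
    set q := Sg.max' hSne with hqdef
    rw [hSdef, Finset.mem_filter, Finset.mem_Icc] at hqm
    obtain ⟨⟨hq1, hqn⟩, hqw⟩ := hqm
    have hqe : w q = -1 := by
      rcases eq_or_lt_of_le hqn with hqn' | hqn'
    -- q = n
      · rw [hqn'] at hqw ⊢
        omega
      · -- q < n
        have hq1m : q + 1 ∉ Sg := by
          intro hc
          have := Sg.le_max' (q + 1) hc
          omega
        have hq1pos : 0 < w (q + 1) := by
          rw [hSdef, Finset.mem_filter, Finset.mem_Icc] at hq1m
          push_neg at hq1m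
          have hne0 := zsp_ne hw.1 (show q + 1 ≠ 0 by omega)
          have := hq1m ⟨by omega, by omega⟩
          omega
        have hnl := h2 q hq1 (by omega)
        by_contra hcc2
        apply hnl
        exact ⟨-1, by norm_num, by omega, by omega⟩
    -- contradiction with w p = 1
    have hwp : w (-p) = -1 := by
      rw [hw.1.1 p, hpdef, Equiv.apply_symm_apply]
    have := w.injective (hqe.trans hwp.symm)
    omega
  -- upper bound w q ≤ q
  have hle : ∀ k : ℕ, ∀ q : ℤ, 1 ≤ q → q ≤ n → q ≤ 1 + (k : ℤ) → w q ≤ q := by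
    intro k
    induction k with
    | zero =>
      intro q hq1 hqn hqk
      have : q = 1 := by omega
      subst this
      omega
    | succ k ih =>
      intro q hq1 hqn hqk
      rcases le_or_gt q (1 + (k : ℤ)) with h | h
      · exact ih q hq1 hqn h
      · have hq2 : 2 ≤ q := by omega
        have hwle := ih (q - 1) (by omega) (by omega) (by push_cast; omega)
        have hnl := h2 (q - 1) (by omega) (by omega)
        rw [show q - 1 + 1 = q by ring] at hnl
        by_contra hcc
        apply hnl
        refine ⟨w (q - 1) + 1, ?_, by omega, ?_⟩
        · have := hpos (q - 1) (by omega) (by omega); omega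
        · omega
  -- w q = q
  have heq : ∀ k : ℕ, ∀ q : ℤ, 1 ≤ q → q ≤ n → q ≤ 1 + (k : ℤ) → w q = q := by
    intro k
    induction k with
    | zero =>
      intro q hq1 hqn hqk
      have : q = 1 := by omega
      have h2' := hpos q hq1 hqn
      have h3' := hle 0 q hq1 hqn hqk
      omega
    | succ k ih =>
      intro q hq1 hqn hqk
      rcases le_or_gt q (1 + (k : ℤ)) with h | h
      · exact ih q hq1 hqn h
      · have hwle := hle (k + 1) q hq1 hqn hqk
        have hwpos := hpos q hq1 hqn
        by_contra hcc
        have hj1 : 1 ≤ w q := by omega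
        have hjq : w q ≤ q - 1 := by omega
        have hwj : w (w q) = w q := ih (w q) hj1 (by omega) (by push_cast; omega)
        have := w.injective hwj
        omega
  -- conclude w = 1
  apply Equiv.ext
  intro x
  rw [Equiv.Perm.one_apply]
  rcases le_or_gt x (-1) with hx | hx
  · rcases le_or_gt (-(n : ℤ)) x with hx2 | hx2
    · have hwx : w (-x) = -x := heq n (-x) (by omega) (by omega) (by omega)
      have : w (-(-x)) = -(w (-x)) := hw.1.1 (-x)
      rw [neg_neg, hwx] at this
      omega
    · exact hw.1.2 x (by rw [abs_of_neg (by omega)]; omega)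
  · rcases lt_or_ge x 1 with hx2 | hx2
    · have : x = 0 := by omega
      rw [this, zsp_zero hw.1]
    · rcases le_or_gt x n with hx3 | hx3
      · exact heq n x hx2 hx3 (by omega)
      · exact hw.1.2 x (by rw [abs_of_pos (by omega)]; omega)

lemma zid_mem (n : ℕ) : InXn n 1 :=
  ⟨⟨fun i => by simp, fun i _ => by simp⟩, by exact (show (0:ℤ) < 1 by norm_num)⟩

lemma zmin_aux {n : ℕ} (hn : 1 ≤ n) :
    ∀ N : ℕ, ∀ w : Equiv.Perm ℤ, InXn n w → (zrho n w + zBb n).toNat ≤ N →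
      Relation.ReflTransGen (covRel n) 1 w := by
  intro N
  induction N with
  | zero =>
    intro w hw hle
    by_cases hne : w = 1
    · subst hne; exact Relation.ReflTransGen.refl
    · exfalso
      obtain ⟨u, hcov⟩ := zexists_pred hn hw hne
      have hu : InXn n u := hcov.1
      have hr := zrho_covRel hn hcov
      have hlb := zrho_lb hn hu
      omega
  | succ N ih =>
    intro w hw hle
    by_cases hne : w = 1
    · subst hne; exact Relation.ReflTransGen.refl
    · obtain ⟨u, hcov⟩ := zexists_pred hn hw hne
      have hu : InXn n u := hcov.1
      have hr := zrho_covRel hn hcov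
      have hlb := zrho_lb hn hu
      exact (ih u hu (by omega)).tail hcov


/-- Theorem: `⇀` is the covering relation of a partial order on `X_n`
with minimum the identity. Let `≤` be the reflexive–transitive closure of `⇀`. Then `≤`
is antisymmetric (hence a partial order); `u ⇀ w` iff `u < w` and there is no `v` with
`u < v < w`; and the identity is the minimum of `(X_n, ≤)`. -/
theorem covRel_poset (n : ℕ) (hn : 1 ≤ n) :
    (∀ u w : Equiv.Perm ℤ, Relation.ReflTransGen (covRel n) u w →
      Relation.ReflTransGen (covRel n) w u → u = w) ∧
    (∀ u w : Equiv.Perm ℤ, covRel n u w ↔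
      ((Relation.ReflTransGen (covRel n) u w ∧ u ≠ w) ∧
        ¬ ∃ v : Equiv.Perm ℤ, (Relation.ReflTransGen (covRel n) u v ∧ u ≠ v) ∧
          (Relation.ReflTransGen (covRel n) v w ∧ v ≠ w))) ∧
    (∀ w : Equiv.Perm ℤ, InXn n w → Relation.ReflTransGen (covRel n) 1 w) := by
  refine ⟨?_, ?_, ?_⟩
  · intro u w h1 h2
    have a := zrtg hn h1
    have b := zrtg hn h2
    exact a.2 (le_antisymm a.1 b.1)
  · intro u w
    constructor
    · intro h
      have hr := zrho_covRel hn h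
      refine ⟨⟨Relation.ReflTransGen.single h, ?_⟩, ?_⟩
      · intro he; rw [he] at hr; omega
      · rintro ⟨v, ⟨huv, hne1⟩, hvw, hne2⟩
        have a := zrtg hn huv
        have b := zrtg hn hvw
        have ha : zrho n u < zrho n v := by
          rcases lt_or_eq_of_le a.1 with h' | h'
          · exact h'
          · exact absurd (a.2 h') hne1
        have hb : zrho n v < zrho n w := by
          rcases lt_or_eq_of_le b.1 with h' | h'
          · exact h'
          · exact absurd (b.2 h') hne2
        omega
    · rintro ⟨⟨hle, hne⟩, hnomid⟩
      rcases Relation.ReflTransGen.cases_head hle with he | ⟨v, hcov, hrest⟩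
      · exact absurd he hne
      · by_cases hvw : v = w
        · subst hvw; exact hcov
        · exfalso
          apply hnomid
          refine ⟨v, ⟨Relation.ReflTransGen.single hcov, ?_⟩, hrest, hvw⟩
          intro he
          have := zrho_covRel hn hcov
          rw [← he] at this
          omega
  · intro w hw
    exact zmin_aux hn (zrho n w + zBb n).toNat w hw le_rfl
end

section
/- Let n ≥ 1, w ∈ X_n, and set k := cdes(w⁻¹). Then for every j ∈ {1,…,n+1}, the vector v := v^j(w) ∈ ½ℤⁿ satisfies: 0 ≤ 2v_1 ≤ 1; 0 ≤ v_i − v_{i−1} ≤ 1 for all 2 ≤ i ≤ n; and k−1 ≤ 2v_n ≤ k. (Hence the simplex A(w) := Conv{v^1(w),…,v^{n+1}(w)} is contained in the type C hypersimplex Δ_{C_n,k} = {x ∈ ℝⁿ : 0 ≤ 2x_1, x_2−x_1, …, x_n−x_{n−1} ≤ 1, k−1 ≤ 2x_n ≤ k}.) -/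
open scoped Classical

-- helpers
noncomputable def epsQ (j n b : ℤ) : ℚ :=
  (if b ∈ Finset.Icc j n then 1 else 0) + (if -b ∈ Finset.Icc j n then -1 else 0)

lemma signed_apply_zero (n : ℕ) (w : Equiv.Perm ℤ) (hw : IsSignedPerm n w) : w 0 = 0 := by
  have := hw.1 0; simp at this; omega

lemma signed_symm_neg (n : ℕ) (w : Equiv.Perm ℤ) (hw : IsSignedPerm n w) (i : ℤ) :
    w.symm (-i) = - w.symm i := by
  apply w.injective
  rw [Equiv.apply_symm_apply, hw.1, Equiv.apply_symm_apply]

lemma signed_symm_ne_zero (n : ℕ) (w : Equiv.Perm ℤ) (hw : IsSignedPerm n w) (i : ℤ)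
    (hi : i ≠ 0) : w.symm i ≠ 0 := by
  intro h
  apply hi
  have := signed_apply_zero n w hw
  rw [Equiv.symm_apply_eq] at h
  omega

lemma signed_symm_abs_le (n : ℕ) (w : Equiv.Perm ℤ) (hw : IsSignedPerm n w) (i : ℤ)
    (hi : |i| ≤ (n : ℤ)) : |w.symm i| ≤ (n : ℤ) := by
  by_contra h
  push_neg at h
  have h2 := hw.2 (w.symm i) h
  rw [Equiv.apply_symm_apply] at h2
  rw [← h2] at h
  omega

lemma sum_eq_epsQ (n : ℕ) (w : Equiv.Perm ℤ) (hw : IsSignedPerm n w)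
    (j : ℤ) (i : ℤ) (hi : i ≠ 0) :
    ∑ m ∈ Finset.Icc j (n : ℤ),
        (if w m = i then (1 : ℚ) else if w m = -i then -1 else 0)
      = epsQ j n (w.symm i) := by
  have hb0 : w.symm i ≠ 0 := signed_symm_ne_zero n w hw i hi
  have key : ∀ m : ℤ, (if w m = i then (1:ℚ) else if w m = -i then -1 else 0)
      = (if m = w.symm i then 1 else 0) + (if m = -(w.symm i) then -1 else 0) := by
    intro m
    have h1 : w m = i ↔ m = w.symm i := by
      constructor
      · intro h; rw [← h, Equiv.symm_apply_apply]
      · intro h; rw [h, Equiv.apply_symm_apply]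
    have h2 : w m = -i ↔ m = -(w.symm i) := by
      have hni : w (-(w.symm i)) = -i := by rw [hw.1, Equiv.apply_symm_apply]
      constructor
      · intro h; exact w.injective (h.trans hni.symm)
      · intro h; rw [h, hni]
    simp only [h1, h2]
    split_ifs <;> norm_num <;> omega
  simp only [key]
  rw [Finset.sum_add_distrib, Finset.sum_ite_eq', Finset.sum_ite_eq']
  rfl

lemma epsQ_pos_bounds (j n b : ℤ) (hj : 1 ≤ j) (hb : 0 < b) :
    0 ≤ epsQ j n b ∧ epsQ j n b ≤ 1 := by
  unfold epsQ
  simp only [Finset.mem_Icc]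
  constructor <;> (split_ifs <;> norm_num <;> omega)

lemma epsQ_neg_bounds (j n b : ℤ) (hj : 1 ≤ j) (hb : b < 0) :
    -1 ≤ epsQ j n b ∧ epsQ j n b ≤ 0 := by
  unfold epsQ
  simp only [Finset.mem_Icc]
  constructor <;> (split_ifs <;> norm_num <;> omega)

lemma epsQ_bounds (j n b : ℤ) (hj : 1 ≤ j) :
    -1 ≤ epsQ j n b ∧ epsQ j n b ≤ 1 := by
  unfold epsQ
  simp only [Finset.mem_Icc]
  constructor <;> (split_ifs <;> norm_num <;> omega)

lemma epsQ_mono (j n a b : ℤ) (hj : 1 ≤ j) (han : |a| ≤ n) (hbn : |b| ≤ n)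
    (hab : a < b) : epsQ j n a ≤ epsQ j n b := by
  rw [abs_le] at han hbn
  unfold epsQ
  simp only [Finset.mem_Icc]
  split_ifs <;> norm_num <;> omega

lemma mem_cdesSet_pos (n : ℕ) (u : Equiv.Perm ℤ) (c : ℤ) (hc1 : 1 ≤ c)
    (hc2 : c ≤ (n : ℤ) - 1) : c ∈ cdesSet n u ↔ u (c + 1) < u c := by
  unfold cdesSet csucc
  simp only [Finset.mem_filter, Finset.mem_Icc]
  rw [if_neg (by omega), if_neg (by omega)]
  constructor
  · rintro ⟨_, _, h⟩; exact h
  · intro h; exact ⟨⟨by omega, by omega⟩, by omega, h⟩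

lemma cdes_split (n : ℕ) (hn : 1 ≤ n) (w : Equiv.Perm ℤ) (hw : InXn n w) :
    (cdes n w.symm : ℤ)
      = 2 * ((Finset.Icc (1 : ℤ) ((n : ℤ) - 1) ∩ cdesSet n w.symm).card : ℤ)
        + (if 0 < w.symm (n : ℤ) then 1 else 0) := by
  obtain ⟨hs, hx⟩ := hw
  have hsym := signed_symm_neg n w hs
  set P := cdesSet n w.symm with hP
  have hn1 : (1 : ℤ) ≤ (n : ℤ) := by exact_mod_cast hn
  have hPn : ∀ c ∈ P, -(n : ℤ) ≤ c ∧ c ≤ (n : ℤ) ∧ c ≠ 0 := by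
    intro c hc
    rw [hP] at hc
    unfold cdesSet at hc
    simp only [Finset.mem_filter, Finset.mem_Icc] at hc
    exact ⟨hc.1.1, hc.1.2, hc.2.1⟩
  have hm1 : (-1 : ℤ) ∉ P := by
    rw [hP]
    unfold cdesSet csucc
    simp only [Finset.mem_filter, Finset.mem_Icc]
    simp only [if_true]
    push_neg
    intro _ _
    have h1 := hsym 1
    omega
  have hneg_iff : ∀ c : ℤ, -(n : ℤ) ≤ c → c ≤ -2 → (c ∈ P ↔ -c - 1 ∈ P) := by
    intro c h1 h2
    rw [hP]
    unfold cdesSet csucc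
    simp only [Finset.mem_filter, Finset.mem_Icc]
    rw [if_neg (by omega), if_neg (by omega), if_neg (by omega), if_neg (by omega)]
    rw [show -c - 1 + 1 = -c by ring]
    have e1 : w.symm (c + 1) = - w.symm (-c - 1) := by
      have := hsym (-c - 1); rw [show -(-c - 1) = c + 1 by ring] at this; exact this
    have e2 : w.symm c = - w.symm (-c) := by
      have := hsym (-c); simpa using this
    constructor
    · rintro ⟨_, _, h⟩
      refine ⟨⟨by omega, by omega⟩, by omega, by omega⟩
    · rintro ⟨_, _, h⟩
      refine ⟨⟨by omega, by omega⟩, by omega, by omega⟩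
  have h4 : ((n : ℤ) ∈ P) ↔ 0 < w.symm (n : ℤ) := by
    rw [hP]
    unfold cdesSet csucc
    simp only [Finset.mem_filter, Finset.mem_Icc]
    rw [if_neg (by omega)]
    simp only [if_true]
    have hn' := hsym (n : ℤ)
    constructor
    · rintro ⟨_, _, h⟩; omega
    · intro h; exact ⟨⟨by omega, by omega⟩, by omega, by omega⟩
  have h1 : (P.filter (fun c => c < 0)).card + (P.filter (fun c => ¬ c < 0)).card
      = P.card := Finset.card_filter_add_card_filter_not _
  have h2 : P.filter (fun c => ¬ c < 0)
      = (Finset.Icc (1 : ℤ) ((n : ℤ) - 1) ∩ P) ∪ P.filter (fun c => c = (n : ℤ)) := by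
    ext c
    simp only [Finset.mem_filter, Finset.mem_union, Finset.mem_inter, Finset.mem_Icc, not_lt]
    constructor
    · rintro ⟨hc, h0⟩
      obtain ⟨l1, l2, l3⟩ := hPn c hc
      rcases eq_or_lt_of_le l2 with h | h
      · exact Or.inr ⟨hc, h⟩
      · exact Or.inl ⟨⟨by omega, by omega⟩, hc⟩
    · rintro (⟨⟨l1, l2⟩, hc⟩ | ⟨hc, rfl⟩)
      · exact ⟨hc, by omega⟩
      · exact ⟨hc, by omega⟩
  have hdisj : Disjoint (Finset.Icc (1 : ℤ) ((n : ℤ) - 1) ∩ P)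
      (P.filter (fun c => c = (n : ℤ))) := by
    rw [Finset.disjoint_left]
    intro c hc hc'
    simp only [Finset.mem_inter, Finset.mem_Icc] at hc
    simp only [Finset.mem_filter] at hc'
    omega
  have h3 : (P.filter (fun c => c < 0)).card
      = (Finset.Icc (1 : ℤ) ((n : ℤ) - 1) ∩ P).card := by
    apply Finset.card_bij (fun c _ => -c - 1)
    · intro c hc
      simp only [Finset.mem_filter] at hc
      obtain ⟨hcP, hneg⟩ := hc
      obtain ⟨l1, l2, l3⟩ := hPn c hcP
      have hc2 : c ≤ -2 := by
        rcases eq_or_ne c (-1) with h | h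
        · exact absurd (h ▸ hcP) hm1
        · omega
      simp only [Finset.mem_inter, Finset.mem_Icc]
      exact ⟨⟨by omega, by omega⟩, (hneg_iff c l1 hc2).mp hcP⟩
    · intro a _ b _ h
      omega
    · intro b hb
      simp only [Finset.mem_inter, Finset.mem_Icc] at hb
      obtain ⟨⟨l1, l2⟩, hbP⟩ := hb
      refine ⟨-b - 1, ?_, by ring⟩
      simp only [Finset.mem_filter]
      constructor
      · rw [hneg_iff (-b - 1) (by omega) (by omega)]
        rw [show -(-b - 1) - 1 = b by ring]
        exact hbP
      · omega
  have h5 : (P.filter (fun c => c = (n : ℤ))).card = if 0 < w.symm (n : ℤ) then 1 else 0 := by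
    rw [Finset.filter_eq']
    by_cases hmem : (n : ℤ) ∈ P
    · rw [if_pos hmem, if_pos (h4.mp hmem), Finset.card_singleton]
    · rw [if_neg hmem, if_neg (fun h => hmem (h4.mpr h)), Finset.card_empty]
  have hcard : P.card = 2 * (Finset.Icc (1 : ℤ) ((n : ℤ) - 1) ∩ P).card
      + (if 0 < w.symm (n : ℤ) then 1 else 0) := by
    rw [← h1, h2, Finset.card_union_of_disjoint hdisj, h3, h5]
    ring
  unfold cdes
  rw [← hP, hcard]
  push_cast
  split_ifs <;> push_cast <;> ring

/-- For `w ∈ X_n` with `k := cdes(w⁻¹)`, every vertex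
`v = v^j(w)` (`1 ≤ j ≤ n+1`) satisfies `0 ≤ 2v_1 ≤ 1`, `0 ≤ v_i - v_{i-1} ≤ 1` for
`2 ≤ i ≤ n`, and `k - 1 ≤ 2v_n ≤ k`; hence the alcove `A(w)` lies in `Δ_{C_n,k}`. -/
theorem alcove_in_hypersimplex (n : ℕ) (hn : 1 ≤ n) (w : Equiv.Perm ℤ) (hw : InXn n w)
    (j : ℕ) (hj1 : 1 ≤ j) (hj2 : j ≤ n + 1) :
    (0 ≤ 2 * vcoord n w j 1 ∧ 2 * vcoord n w j 1 ≤ 1) ∧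
    (∀ i : ℕ, 2 ≤ i → i ≤ n →
      0 ≤ vcoord n w j i - vcoord n w j (i - 1) ∧
        vcoord n w j i - vcoord n w j (i - 1) ≤ 1) ∧
    ((cdes n w.symm : ℚ) - 1 ≤ 2 * vcoord n w j n ∧
      2 * vcoord n w j n ≤ (cdes n w.symm : ℚ)) := by
  obtain ⟨hs, hx⟩ := hw
  have hj1' : (1 : ℤ) ≤ (j : ℤ) := by exact_mod_cast hj1
  have hn1 : (1 : ℤ) ≤ (n : ℤ) := by exact_mod_cast hn
  have hv : ∀ i : ℕ, 1 ≤ i → vcoord n w j i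
      = ((Finset.Icc (1 : ℤ) ((i : ℤ) - 1) ∩ cdesSet n w.symm).card : ℚ)
        + (1 / 2) * epsQ (j : ℤ) (n : ℤ) (w.symm (i : ℤ)) := by
    intro i hi
    unfold vcoord
    rw [sum_eq_epsQ n w hs (j : ℤ) (i : ℤ) (by exact_mod_cast Nat.one_le_iff_ne_zero.mp hi)]
  refine ⟨?_, ?_, ?_⟩
  · rw [hv 1 le_rfl]
    simp only [Nat.cast_one]
    rw [show ((1 : ℤ) - 1) = 0 by ring, Finset.Icc_eq_empty (by omega),
      Finset.empty_inter, Finset.card_empty]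
    obtain ⟨e1, e2⟩ := epsQ_pos_bounds (j : ℤ) (n : ℤ) (w.symm 1) hj1' hx
    constructor <;> push_cast <;> linarith
  · intro i h2i hin
    rw [hv i (by omega), hv (i - 1) (by omega)]
    have hcast : (((i - 1 : ℕ)) : ℤ) = (i : ℤ) - 1 := by omega
    rw [hcast]
    set a := w.symm ((i : ℤ) - 1) with ha
    set b := w.symm (i : ℤ) with hb
    have hiZ : (2 : ℤ) ≤ (i : ℤ) := by exact_mod_cast h2i
    have hinZ : (i : ℤ) ≤ (n : ℤ) := by exact_mod_cast hin
    have ha0 : a ≠ 0 := signed_symm_ne_zero n w hs _ (by omega)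
    have hb0 : b ≠ 0 := signed_symm_ne_zero n w hs _ (by omega)
    have haa : |a| ≤ (n : ℤ) := signed_symm_abs_le n w hs _ (by rw [abs_le]; omega)
    have hbb : |b| ≤ (n : ℤ) := signed_symm_abs_le n w hs _ (by rw [abs_le]; omega)
    have hab : a ≠ b := fun h =>
      (by omega : ((i : ℤ) - 1) ≠ (i : ℤ)) (w.symm.injective h)
    have hdes : (((i : ℤ) - 1) ∈ cdesSet n w.symm) ↔ b < a := by
      rw [mem_cdesSet_pos n w.symm ((i : ℤ) - 1) (by omega) (by omega),
        show (i : ℤ) - 1 + 1 = (i : ℤ) by ring]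
    have hins : Finset.Icc (1 : ℤ) ((i : ℤ) - 1)
        = insert ((i : ℤ) - 1) (Finset.Icc 1 ((i : ℤ) - 1 - 1)) := by
      ext c
      simp only [Finset.mem_Icc, Finset.mem_insert]
      omega
    obtain ⟨ba1, ba2⟩ := epsQ_bounds (j : ℤ) (n : ℤ) a hj1'
    obtain ⟨bb1, bb2⟩ := epsQ_bounds (j : ℤ) (n : ℤ) b hj1'
    by_cases hd : b < a
    · have hmem : ((i : ℤ) - 1) ∈ cdesSet n w.symm := hdes.mpr hd
      have hc1 : (Finset.Icc (1 : ℤ) ((i : ℤ) - 1) ∩ cdesSet n w.symm).card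
          = (Finset.Icc (1 : ℤ) ((i : ℤ) - 1 - 1) ∩ cdesSet n w.symm).card + 1 := by
        rw [hins, Finset.insert_inter_of_mem hmem, Finset.card_insert_of_notMem]
        intro h
        simp only [Finset.mem_inter, Finset.mem_Icc] at h
        omega
      have hmono : epsQ (j : ℤ) (n : ℤ) b ≤ epsQ (j : ℤ) (n : ℤ) a :=
        epsQ_mono _ _ _ _ hj1' hbb haa hd
      rw [hc1]
      push_cast
      constructor <;> linarith
    · have hab' : a < b := lt_of_le_of_ne (not_lt.mp hd) hab
      have hmem : ((i : ℤ) - 1) ∉ cdesSet n w.symm := fun h => hd (hdes.mp h)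
      have hc1 : (Finset.Icc (1 : ℤ) ((i : ℤ) - 1) ∩ cdesSet n w.symm).card
          = (Finset.Icc (1 : ℤ) ((i : ℤ) - 1 - 1) ∩ cdesSet n w.symm).card := by
        rw [hins, Finset.insert_inter_of_notMem hmem]
      have hmono : epsQ (j : ℤ) (n : ℤ) a ≤ epsQ (j : ℤ) (n : ℤ) b :=
        epsQ_mono _ _ _ _ hj1' haa hbb hab'
      rw [hc1]
      constructor <;> linarith
  · rw [hv n hn]
    have hk := cdes_split n hn w ⟨hs, hx⟩
    have hb0 : w.symm (n : ℤ) ≠ 0 := signed_symm_ne_zero n w hs _ (by omega)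
    by_cases hsgn : 0 < w.symm (n : ℤ)
    · rw [if_pos hsgn] at hk
      obtain ⟨e1, e2⟩ := epsQ_pos_bounds (j : ℤ) (n : ℤ) _ hj1' hsgn
      have hkq : (cdes n w.symm : ℚ)
          = 2 * ((Finset.Icc (1 : ℤ) ((n : ℤ) - 1) ∩ cdesSet n w.symm).card : ℚ) + 1 := by
        exact_mod_cast hk
      constructor <;> linarith
    · have hneg : w.symm (n : ℤ) < 0 := lt_of_le_of_ne (not_lt.mp hsgn) hb0
      rw [if_neg hsgn] at hk
      obtain ⟨e1, e2⟩ := epsQ_neg_bounds (j : ℤ) (n : ℤ) _ hj1' hneg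
      have hkq : (cdes n w.symm : ℚ)
          = 2 * ((Finset.Icc (1 : ℤ) ((n : ℤ) - 1) ∩ cdesSet n w.symm).card : ℚ) := by
        exact_mod_cast hk
      constructor <;> linarith
end

section
/- For n ≥ 1 let Y_n := {w ∈ X_n : cdes(w⁻¹) ≤ 2}, and define τ_n : Y_n → 𝔅_{n+1} by τ_n(w) := 1 w'_1 w'_2 ⋯ w'_n (window notation), where w'_i := w_i + 1 if w_i > 0 and w'_i := w_i − 1 if w_i < 0. Then τ_n(Y_n) ⊆ Y_{n+1}, and τ_n is a poset embedding: for all u, w ∈ Y_n, u ≤ w in X_n if and only if τ_n(u) ≤ τ_n(w) in X_{n+1}. -/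
open scoped Classical

/-! ### Auxiliary development -/

section TauAux

open Finset

variable {n : ℕ} {w u : Equiv.Perm ℤ}

lemma sp_zero (h : IsSignedPerm n w) : w 0 = 0 := by
  have := h.1 0; simp at this; omega

lemma sp_symm (h : IsSignedPerm n w) : IsSignedPerm n w.symm := by
  constructor
  · intro i
    apply w.injective
    rw [Equiv.apply_symm_apply, h.1, Equiv.apply_symm_apply]
  · intro i hi
    have := h.2 i hi
    conv_lhs => rw [← this]
    exact w.symm_apply_apply i

lemma sp_ne_zero (h : IsSignedPerm n w) {i : ℤ} (hi : i ≠ 0) : w i ≠ 0 := by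
  intro hc
  have h0 : w 0 = 0 := sp_zero h
  exact hi (w.injective (by rw [hc, h0]))

lemma sp_abs_le (h : IsSignedPerm n w) {i : ℤ} (h1 : -(n:ℤ) ≤ i) (h2 : i ≤ (n:ℤ)) :
    -(n:ℤ) ≤ w i ∧ w i ≤ (n:ℤ) := by
  by_contra hc
  have habs : (n:ℤ) < |w i| := by
    rcases abs_cases (w i) with ⟨he, _⟩ | ⟨he, _⟩ <;> omega
  have h3 := h.2 (w i) habs
  have h4 : i = w i := w.injective h3.symm
  rcases abs_cases (w i) with ⟨he, _⟩ | ⟨he, _⟩ <;> omega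

lemma sp_inj_neg (h : IsSignedPerm n w) {i j : ℤ} (hij : w i = - w j) : i = -j := by
  have : w i = w (-j) := by rw [h.1 j, hij]
  exact w.injective this

/-- number of descents of the window of `w⁻¹` strictly before position `q`. -/
noncomputable def cZ (w : Equiv.Perm ℤ) (q : ℤ) : ℤ :=
  ∑ j ∈ Finset.Icc (1:ℤ) (q-1), (if w.symm (j+1) < w.symm j then (1:ℤ) else 0)

noncomputable def AZ (w : Equiv.Perm ℤ) (q : ℤ) : ℤ :=
  2 * cZ w q - (if w.symm q < 0 then 1 else 0)

noncomputable def BZ (w : Equiv.Perm ℤ) (i j : ℤ) : ℤ :=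
  cZ w i + cZ w j - (if w.symm i + w.symm j < 0 then 1 else 0)

def Dom (n : ℕ) (u w : Equiv.Perm ℤ) : Prop :=
  (∀ q : ℤ, 1 ≤ q → q ≤ (n:ℤ) → AZ u q ≤ AZ w q) ∧
  (∀ i j : ℤ, 1 ≤ i → i < j → j ≤ (n:ℤ) → BZ u i j ≤ BZ w i j)

lemma dom_refl (n : ℕ) (w : Equiv.Perm ℤ) : Dom n w w :=
  ⟨fun _ _ _ => le_refl _, fun _ _ _ _ _ => le_refl _⟩

lemma dom_trans {n : ℕ} {a b c : Equiv.Perm ℤ} (h1 : Dom n a b) (h2 : Dom n b c) :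
    Dom n a c :=
  ⟨fun q hq1 hq2 => (h1.1 q hq1 hq2).trans (h2.1 q hq1 hq2),
   fun i j hi hij hj => (h1.2 i j hi hij hj).trans (h2.2 i j hi hij hj)⟩

/-- `Y`-code: `w ∈ X_n` whose inverse window consists of an increasing positive
prefix of length `k` followed by an increasing negative suffix. -/
def YC (n : ℕ) (w : Equiv.Perm ℤ) (k : ℤ) : Prop :=
  InXn n w ∧ 1 ≤ k ∧ k ≤ (n:ℤ) ∧
  (∀ i : ℤ, 1 ≤ i → i ≤ k → 0 < w.symm i) ∧
  (∀ i : ℤ, k < i → i ≤ (n:ℤ) → w.symm i < 0) ∧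
  (∀ i j : ℤ, 1 ≤ i → i < j → j ≤ k → w.symm i < w.symm j) ∧
  (∀ i j : ℤ, k < i → i < j → j ≤ (n:ℤ) → w.symm i < w.symm j)


lemma symm_eq_imp (w : Equiv.Perm ℤ) {x y : ℤ} (h : w.symm x = y) : x = w y := by
  rw [← h, Equiv.apply_symm_apply]

lemma mulsymm (w t : Equiv.Perm ℤ) (x : ℤ) : (w * t).symm x = t.symm (w.symm x) := rfl

set_option maxHeartbeats 2000000 in
lemma covRel_dom (hn : 1 ≤ n) (h : covRel n u w) : Dom n u w := by
  obtain ⟨hu, hw, hcase⟩ := h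
  have hsp := hw.1
  have hsps := sp_symm hsp
  rcases hcase with ⟨h2, he⟩ | ⟨m, hm1, hm2, ⟨c, hc0, hac, hcb⟩, he⟩ | ⟨h2, he⟩
  · -- case (i) : flip the entry ±1 of the inverse window
    have hvu : ∀ x : ℤ, u.symm x = Equiv.swap (1:ℤ) (-1) (w.symm x) := by
      intro x; rw [he, mulsymm, Equiv.symm_swap]
    have hpn : w 1 ≤ (n:ℤ) := (sp_abs_le hsp (by omega) (by exact_mod_cast hn)).2
    have hvp : w.symm (w 1) = 1 := w.symm_apply_apply 1
    have hfact : ∀ x : ℤ, 1 ≤ x → x ≤ (n:ℤ) →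
        (x = w 1 ∧ w.symm x = 1 ∧ u.symm x = -1) ∨
        (x ≠ w 1 ∧ w.symm x ≠ 1 ∧ w.symm x ≠ -1 ∧ w.symm x ≠ 0 ∧ u.symm x = w.symm x) := by
      intro x hx1 hxn
      by_cases hx : w.symm x = 1
      · left
        refine ⟨symm_eq_imp w hx, hx, ?_⟩
        rw [hvu, hx]; simp [Equiv.swap_apply_def]
      · right
        have hx' : w.symm x ≠ -1 := by
          intro hcc
          have h3 : w.symm (-x) = 1 := by rw [hsps.1, hcc]; ring
          have := symm_eq_imp w h3
          omega
        refine ⟨?_, hx, hx', sp_ne_zero hsps (by omega), ?_⟩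
        · intro hcc; rw [hcc] at hx; exact hx hvp
        · rw [hvu]; simp [Equiv.swap_apply_def, hx, hx']
    have hcz : ∀ q : ℤ, 1 ≤ q → q ≤ (n:ℤ) → cZ u q = cZ w q := by
      intro q hq1 hq2
      unfold cZ
      refine Finset.sum_congr rfl fun j hj => ?_
      rw [Finset.mem_Icc] at hj
      have hf1 := hfact j (by omega) (by omega)
      have hf2 := hfact (j+1) (by omega) (by omega)
      have hiff : (u.symm (j+1) < u.symm j) ↔ (w.symm (j+1) < w.symm j) := by
        rcases hf1 with ⟨e1,e2,e3⟩|⟨e1,e2,e3,e4,e5⟩ <;>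
          rcases hf2 with ⟨f1,f2,f3⟩|⟨f1,f2,f3,f4,f5⟩ <;> omega
      exact if_congr hiff rfl rfl
    constructor
    · intro q hq1 hq2
      simp only [AZ, hcz q hq1 hq2]
      rcases hfact q hq1 hq2 with ⟨e1,e2,e3⟩|⟨e1,e2,e3,e4,e5⟩ <;> split_ifs <;> omega
    · intro i j hi hij hj
      simp only [BZ, hcz i (by omega) (by omega), hcz j (by omega) (by omega)]
      rcases hfact i (by omega) (by omega) with ⟨e1,e2,e3⟩|⟨e1,e2,e3,e4,e5⟩ <;>
        rcases hfact j (by omega) (by omega) with ⟨f1,f2,f3⟩|⟨f1,f2,f3,f4,f5⟩ <;>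
        split_ifs <;> omega
  · -- case (ii) : swap values m and m+1 of the inverse window
    have hvu : ∀ x : ℤ,
        u.symm x = Equiv.swap (-m) (-(m+1)) (Equiv.swap m (m+1) (w.symm x)) := by
      intro x; rw [he]; rfl
    have hg : ∀ z : ℤ, Equiv.swap (-m) (-(m+1)) (Equiv.swap m (m+1) z) =
        if z = m then m+1 else if z = m+1 then m
        else if z = -m then -(m+1) else if z = -(m+1) then -m else z := by
      intro z; simp only [Equiv.swap_apply_def]; split_ifs <;> omega
    have hvu' : ∀ x : ℤ, u.symm x =
        (if w.symm x = m then m+1 else if w.symm x = m+1 then m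
        else if w.symm x = -m then -(m+1) else if w.symm x = -(m+1) then -m else w.symm x) := by
      intro x; rw [hvu, hg]
    have ham : w.symm (w m) = m := w.symm_apply_apply m
    have hbm : w.symm (w (m+1)) = m + 1 := w.symm_apply_apply (m+1)
    have hanb : w m ≠ -(w (m+1)) := by
      intro hcc; have := sp_inj_neg hsp hcc; omega
    have ha0 : w m ≠ 0 := sp_ne_zero hsp (by omega)
    have hb0 : w (m+1) ≠ 0 := sp_ne_zero hsp (by omega)
    have haN := sp_abs_le hsp (i := m) (by omega) (by omega)
    have hbN := sp_abs_le hsp (i := m+1) (by omega) (by omega)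
    have hfact : ∃ P Q VP VQ UP UQ : ℤ, 1 ≤ P ∧ P ≤ (n:ℤ) ∧ 1 ≤ Q ∧ Q ≤ (n:ℤ) ∧ P ≠ Q ∧
        ((VP = m ∧ VQ = m+1 ∧ Q ≥ P + 2 ∧ UP = m+1 ∧ UQ = m) ∨
         (VP = -m ∧ VQ = -(m+1) ∧ P ≥ Q + 2 ∧ UP = -(m+1) ∧ UQ = -m) ∨
         (VP = -m ∧ VQ = m+1 ∧ UP = -(m+1) ∧ UQ = m)) ∧
        w.symm P = VP ∧ w.symm Q = VQ ∧ u.symm P = UP ∧ u.symm Q = UQ ∧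
        (∀ x : ℤ, 1 ≤ x → x ≤ (n:ℤ) → x ≠ P → x ≠ Q →
          (w.symm x ≠ m ∧ w.symm x ≠ m+1 ∧ w.symm x ≠ -m ∧ w.symm x ≠ -(m+1) ∧
            w.symm x ≠ 0 ∧ u.symm x = w.symm x)) := by
      have hgen : ∀ x : ℤ, w.symm x ≠ m → w.symm x ≠ m+1 → w.symm x ≠ -m → w.symm x ≠ -(m+1) →
          u.symm x = w.symm x := by
        intro x e1 e2 e3 e4; rw [hvu', if_neg e1, if_neg e2, if_neg e3, if_neg e4]
      have hxm : ∀ x : ℤ, w.symm x = m → x = w m := fun x hx => symm_eq_imp w hx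
      have hxm1 : ∀ x : ℤ, w.symm x = m+1 → x = w (m+1) := fun x hx => symm_eq_imp w hx
      have hxnm : ∀ x : ℤ, w.symm x = -m → x = -(w m) := by
        intro x hx
        have h3 : w.symm (-x) = m := by rw [hsps.1, hx]; ring
        have := symm_eq_imp w h3; omega
      have hxnm1 : ∀ x : ℤ, w.symm x = -(m+1) → x = -(w (m+1)) := by
        intro x hx
        have h3 : w.symm (-x) = m+1 := by rw [hsps.1, hx]; ring
        have := symm_eq_imp w h3; omega
      have hwnm : w.symm (-(w m)) = -m := by rw [hsps.1, ham]
      have hwnm1 : w.symm (-(w (m+1))) = -(m+1) := by rw [hsps.1, hbm]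
      by_cases hapos : 0 < w m
      · refine ⟨w m, w (m+1), m, m+1, m+1, m, by omega, by omega, by omega, by omega, by omega,
          Or.inl ⟨rfl, rfl, by omega, rfl, rfl⟩, ham, hbm, ?_, ?_, ?_⟩
        · rw [hvu', ham, if_pos rfl]
        · rw [hvu', hbm, if_neg (by omega), if_pos rfl]
        · intro x hx1 hxn hxP hxQ
          have e1 : w.symm x ≠ m := fun hcc => hxP (hxm x hcc)
          have e2 : w.symm x ≠ m+1 := fun hcc => hxQ (hxm1 x hcc)
          have e3 : w.symm x ≠ -m := fun hcc => by have := hxnm x hcc; omega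
          have e4 : w.symm x ≠ -(m+1) := fun hcc => by have := hxnm1 x hcc; omega
          exact ⟨e1, e2, e3, e4, sp_ne_zero hsps (by omega), hgen x e1 e2 e3 e4⟩
      · by_cases hbneg : w (m+1) < 0
        · refine ⟨-(w m), -(w (m+1)), -m, -(m+1), -(m+1), -m, by omega, by omega, by omega,
            by omega, by omega, Or.inr (Or.inl ⟨rfl, rfl, by omega, rfl, rfl⟩),
            hwnm, hwnm1, ?_, ?_, ?_⟩
          · rw [hvu', hwnm, if_neg (by omega), if_neg (by omega), if_pos rfl]
          · rw [hvu', hwnm1, if_neg (by omega), if_neg (by omega), if_neg (by omega),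
              if_pos rfl]
          · intro x hx1 hxn hxP hxQ
            have e1 : w.symm x ≠ m := fun hcc => by have := hxm x hcc; omega
            have e2 : w.symm x ≠ m+1 := fun hcc => by have := hxm1 x hcc; omega
            have e3 : w.symm x ≠ -m := fun hcc => by have := hxnm x hcc; omega
            have e4 : w.symm x ≠ -(m+1) := fun hcc => by have := hxnm1 x hcc; omega
            exact ⟨e1, e2, e3, e4, sp_ne_zero hsps (by omega), hgen x e1 e2 e3 e4⟩
        · -- mixed : w m < 0 < w (m+1)
          refine ⟨-(w m), w (m+1), -m, m+1, -(m+1), m, by omega, by omega, by omega, by omega,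
            by omega, Or.inr (Or.inr ⟨rfl, rfl, rfl, rfl⟩), hwnm, hbm, ?_, ?_, ?_⟩
          · rw [hvu', hwnm, if_neg (by omega), if_neg (by omega), if_pos rfl]
          · rw [hvu', hbm, if_neg (by omega), if_pos rfl]
          · intro x hx1 hxn hxP hxQ
            have e1 : w.symm x ≠ m := fun hcc => by have := hxm x hcc; omega
            have e2 : w.symm x ≠ m+1 := fun hcc => hxQ (hxm1 x hcc)
            have e3 : w.symm x ≠ -m := fun hcc => by have := hxnm x hcc; omega
            have e4 : w.symm x ≠ -(m+1) := fun hcc => by have := hxnm1 x hcc; omega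
            exact ⟨e1, e2, e3, e4, sp_ne_zero hsps (by omega), hgen x e1 e2 e3 e4⟩
    obtain ⟨P, Q, VP, VQ, UP, UQ, hP1, hPn, hQ1, hQn, hPQ, hsig, hwP, hwQ, huP, huQ, hgen⟩ :=
      hfact
    have hufact : ∀ x : ℤ, 1 ≤ x → x ≤ (n:ℤ) →
        (x = P ∧ w.symm x = VP ∧ u.symm x = UP) ∨
        (x = Q ∧ w.symm x = VQ ∧ u.symm x = UQ) ∨
        (x ≠ P ∧ x ≠ Q ∧ w.symm x ≠ m ∧ w.symm x ≠ m+1 ∧ w.symm x ≠ -m ∧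
          w.symm x ≠ -(m+1) ∧ w.symm x ≠ 0 ∧ u.symm x = w.symm x) := by
      intro x hx1 hxn
      by_cases hxP : x = P
      · exact Or.inl ⟨hxP, hxP ▸ hwP, hxP ▸ huP⟩
      by_cases hxQ : x = Q
      · exact Or.inr (Or.inl ⟨hxQ, hxQ ▸ hwQ, hxQ ▸ huQ⟩)
      · obtain ⟨e1,e2,e3,e4,e5,e6⟩ := hgen x hx1 hxn hxP hxQ
        exact Or.inr (Or.inr ⟨hxP, hxQ, e1, e2, e3, e4, e5, e6⟩)
    have hm0 : (1:ℤ) ≤ m := hm1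
    have hcz : ∀ q : ℤ, 1 ≤ q → q ≤ (n:ℤ) → cZ u q = cZ w q := by
      intro q hq1 hq2
      unfold cZ
      refine Finset.sum_congr rfl fun j hj => ?_
      rw [Finset.mem_Icc] at hj
      have hf1 := hufact j (by omega) (by omega)
      have hf2 := hufact (j+1) (by omega) (by omega)
      have hiff : (u.symm (j+1) < u.symm j) ↔ (w.symm (j+1) < w.symm j) := by
        rcases hf1 with ⟨e1,e2,e3⟩|⟨e1,e2,e3⟩|⟨e1,e2,e3,e4,e5,e6,e7,e8⟩ <;>
          rcases hf2 with ⟨f1,f2,f3⟩|⟨f1,f2,f3⟩|⟨f1,f2,f3,f4,f5,f6,f7,f8⟩ <;>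
          rcases hsig with ⟨s1,s2,s3,s4,s5⟩|⟨s1,s2,s3,s4,s5⟩|⟨s1,s2,s3,s4⟩ <;> omega
      exact if_congr hiff rfl rfl
    constructor
    · intro q hq1 hq2
      simp only [AZ, hcz q hq1 hq2]
      rcases hufact q hq1 hq2 with ⟨e1,e2,e3⟩|⟨e1,e2,e3⟩|⟨e1,e2,e3,e4,e5,e6,e7,e8⟩ <;>
        rcases hsig with ⟨s1,s2,s3,s4,s5⟩|⟨s1,s2,s3,s4,s5⟩|⟨s1,s2,s3,s4⟩ <;>
        split_ifs <;> omega
    · intro i j hi hij hj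
      simp only [BZ, hcz i (by omega) (by omega), hcz j (by omega) (by omega)]
      rcases hufact i (by omega) (by omega) with ⟨e1,e2,e3⟩|⟨e1,e2,e3⟩|⟨e1,e2,e3,e4,e5,e6,e7,e8⟩ <;>
        rcases hufact j (by omega) (by omega) with ⟨f1,f2,f3⟩|⟨f1,f2,f3⟩|⟨f1,f2,f3,f4,f5,f6,f7,f8⟩ <;>
        rcases hsig with ⟨s1,s2,s3,s4,s5⟩|⟨s1,s2,s3,s4,s5⟩|⟨s1,s2,s3,s4⟩ <;>
        split_ifs <;> omega
  · -- case (iii) : flip the entry -n of the inverse window to n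
    have hvu : ∀ x : ℤ, u.symm x = Equiv.swap (n:ℤ) (-(n:ℤ)) (w.symm x) := by
      intro x; rw [he, mulsymm, Equiv.symm_swap]
    have hn1 : (1:ℤ) ≤ (n:ℤ) := by exact_mod_cast hn
    have hwn := sp_abs_le hsp (i := (n:ℤ)) (by omega) (by omega)
    set p : ℤ := -(w (n:ℤ)) with hpdef
    have hp2 : 2 ≤ p := by omega
    have hpn : p ≤ (n:ℤ) := by omega
    have hvp : w.symm p = -(n:ℤ) := by
      have h3 : w.symm (-(w (n:ℤ))) = -(w.symm (w (n:ℤ))) := hsps.1 (w (n:ℤ))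
      rw [w.symm_apply_apply] at h3
      exact h3
    have hfact : ∀ x : ℤ, 1 ≤ x → x ≤ (n:ℤ) →
        (x = p ∧ w.symm x = -(n:ℤ) ∧ u.symm x = (n:ℤ)) ∨
        (x ≠ p ∧ w.symm x ≠ (n:ℤ) ∧ w.symm x ≠ -(n:ℤ) ∧ u.symm x = w.symm x) := by
      intro x hx1 hxn
      by_cases hx : w.symm x = -(n:ℤ)
      · left
        refine ⟨?_, hx, ?_⟩
        · have h4 := symm_eq_imp w hx
          have h5 : w (-(n:ℤ)) = -(w (n:ℤ)) := hsp.1 (n:ℤ)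
          omega
        · rw [hvu, hx]
          simp [Equiv.swap_apply_def]
      · right
        have hx' : w.symm x ≠ (n:ℤ) := by
          intro hcc
          have h3 : w.symm (-x) = -(n:ℤ) := by rw [hsps.1, hcc]
          have h4 := symm_eq_imp w h3
          have h5 : w (-(n:ℤ)) = -(w (n:ℤ)) := hsp.1 (n:ℤ)
          omega
        refine ⟨fun hcc => hx (hcc ▸ hvp), hx', hx, ?_⟩
        rw [hvu]; simp [Equiv.swap_apply_def, hx, hx']
    have hczd : ∀ q : ℤ, 1 ≤ q → q ≤ (n:ℤ) →
        cZ u q = cZ w q + (if p + 1 ≤ q then 1 else 0) - (if p ≤ q then 1 else 0) := by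
      intro q hq1 hq2
      unfold cZ
      have key : ∀ j ∈ Finset.Icc (1:ℤ) (q-1),
          (if u.symm (j+1) < u.symm j then (1:ℤ) else 0)
          = (if w.symm (j+1) < w.symm j then (1:ℤ) else 0)
            + (if j = p then 1 else 0) - (if j = p - 1 then 1 else 0) := by
        intro j hj; rw [Finset.mem_Icc] at hj
        have hf1 := hfact j (by omega) (by omega)
        have hf2 := hfact (j+1) (by omega) (by omega)
        have hb1 := sp_abs_le hsps (i := j) (by omega) (by omega)
        have hb2 := sp_abs_le hsps (i := j+1) (by omega) (by omega)
        rcases hf1 with ⟨e1,e2,e3⟩|⟨e1,e2,e3,e4⟩ <;> rcases hf2 with ⟨f1,f2,f3⟩|⟨f1,f2,f3,f4⟩ <;>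
          split_ifs <;> omega
      rw [Finset.sum_congr rfl key]
      rw [Finset.sum_sub_distrib, Finset.sum_add_distrib]
      rw [Finset.sum_ite_eq' (Finset.Icc (1:ℤ) (q-1)) p (fun _ => (1:ℤ))]
      rw [Finset.sum_ite_eq' (Finset.Icc (1:ℤ) (q-1)) (p-1) (fun _ => (1:ℤ))]
      have m1 : (p ∈ Finset.Icc (1:ℤ) (q-1)) = (p + 1 ≤ q) := by
        simp only [Finset.mem_Icc, eq_iff_iff]
        constructor
        · intro hh; omega
        · intro hh; omega
      have m2 : ((p-1) ∈ Finset.Icc (1:ℤ) (q-1)) = (p ≤ q) := by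
        simp only [Finset.mem_Icc, eq_iff_iff]
        constructor
        · intro hh; omega
        · intro hh; omega
      simp only [m1, m2]
    constructor
    · intro q hq1 hq2
      simp only [AZ, hczd q hq1 hq2]
      rcases hfact q hq1 hq2 with ⟨e1,e2,e3⟩|⟨e1,e2,e3,e4⟩ <;> split_ifs <;> omega
    · intro i j hi hij hj
      simp only [BZ, hczd i (by omega) (by omega), hczd j (by omega) (by omega)]
      have hbi := sp_abs_le hsps (i := i) (by omega) (by omega)
      have hbj := sp_abs_le hsps (i := j) (by omega) (by omega)
      rcases hfact i (by omega) (by omega) with ⟨e1,e2,e3⟩|⟨e1,e2,e3,e4⟩ <;>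
        rcases hfact j (by omega) (by omega) with ⟨f1,f2,f3⟩|⟨f1,f2,f3,f4⟩ <;>
        split_ifs <;> omega

lemma mono_of_steps (f : ℤ → ℤ) (a b : ℤ) (hstep : ∀ j, a ≤ j → j ≤ b - 1 → f j < f (j+1)) :
    ∀ i j, a ≤ i → i < j → j ≤ b → f i < f j := by
  have H : ∀ t : ℕ, ∀ i j, a ≤ i → i < j → j ≤ b → j - i = (t:ℤ) → f i < f j := by
    intro t
    induction t with
    | zero => intro i j _ h2 _ h4; omega
    | succ t ih =>
      intro i j h1 h2 h3 h4
      by_cases hji : j = i + 1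
      · rw [hji]; exact hstep i h1 (by omega)
      · have h5 : f i < f (j-1) := ih i (j-1) h1 (by omega) (by omega) (by omega)
        have h6 : f (j-1) < f j := by
          have := hstep (j-1) (by omega) (by omega)
          simpa using this
        omega
  intro i j h1 h2 h3
  exact H (j - i).toNat i j h1 h2 h3 (by omega)

lemma cdes_formula (hn : 1 ≤ n) (hsp : IsSignedPerm n w) (hx : 0 < w.symm 1) :
    (cdes n w.symm : ℤ) = 2 * cZ w (n:ℤ) + (if 0 < w.symm (n:ℤ) then 1 else 0) := by
  have hsps := sp_symm hsp
  have hcast : (cdes n w.symm : ℤ)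
      = ∑ i ∈ Finset.Icc (-(n:ℤ)) (n:ℤ),
          (if (i ≠ 0 ∧ w.symm (csucc n i) < w.symm i) then (1:ℤ) else 0) := by
    unfold cdes cdesSet
    rw [Finset.card_filter]
    push_cast
    rfl
  have hsplit : Finset.Icc (-(n:ℤ)) (n:ℤ)
      = Finset.Icc (-(n:ℤ)) (-1) ∪ Finset.Icc 0 (n:ℤ) := by
    ext x; simp only [Finset.mem_Icc, Finset.mem_union]; omega
  have hdisj : Disjoint (Finset.Icc (-(n:ℤ)) (-1)) (Finset.Icc 0 (n:ℤ)) := by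
    rw [Finset.disjoint_left]
    intro x hx1 hx2
    simp only [Finset.mem_Icc] at hx1 hx2
    omega
  rw [hcast, hsplit, Finset.sum_union hdisj]
  -- positive part
  have hpos : ∑ i ∈ Finset.Icc (0:ℤ) (n:ℤ),
      (if (i ≠ 0 ∧ w.symm (csucc n i) < w.symm i) then (1:ℤ) else 0)
      = cZ w (n:ℤ) + (if 0 < w.symm (n:ℤ) then 1 else 0) := by
    have h0 : Finset.Icc (0:ℤ) (n:ℤ) = insert 0 (Finset.Icc 1 (n:ℤ)) := by
      ext x; simp only [Finset.mem_Icc, Finset.mem_insert]; omega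
    have h0' : (0:ℤ) ∉ Finset.Icc (1:ℤ) (n:ℤ) := by simp
    rw [h0, Finset.sum_insert h0']
    have h1 : Finset.Icc (1:ℤ) (n:ℤ) = insert (n:ℤ) (Finset.Icc 1 ((n:ℤ)-1)) := by
      ext x; simp only [Finset.mem_Icc, Finset.mem_insert]; omega
    have h1' : (n:ℤ) ∉ Finset.Icc (1:ℤ) ((n:ℤ)-1) := by simp [Finset.mem_Icc]
    rw [h1, Finset.sum_insert h1']
    have hn0 : (if ((0:ℤ) ≠ 0 ∧ w.symm (csucc n 0) < w.symm 0) then (1:ℤ) else 0) = 0 := by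
      simp
    have hnn : (if ((n:ℤ) ≠ 0 ∧ w.symm (csucc n (n:ℤ)) < w.symm (n:ℤ)) then (1:ℤ) else 0)
        = (if 0 < w.symm (n:ℤ) then 1 else 0) := by
      have hcs : csucc n (n:ℤ) = -(n:ℤ) := by
        unfold csucc
        rw [if_neg (by omega), if_pos rfl]
      rw [hcs]
      have hneg : w.symm (-(n:ℤ)) = -(w.symm (n:ℤ)) := hsps.1 _
      rw [hneg]
      have hnz : w.symm (n:ℤ) ≠ 0 := sp_ne_zero hsps (by omega)
      split_ifs <;> omega
    have hrest : ∑ i ∈ Finset.Icc (1:ℤ) ((n:ℤ)-1),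
        (if (i ≠ 0 ∧ w.symm (csucc n i) < w.symm i) then (1:ℤ) else 0) = cZ w (n:ℤ) := by
      unfold cZ
      refine Finset.sum_congr rfl fun j hj => ?_
      rw [Finset.mem_Icc] at hj
      have hcs : csucc n j = j + 1 := by
        unfold csucc
        rw [if_neg (by omega), if_neg (by omega)]
      rw [hcs]
      have : (j ≠ 0 ∧ w.symm (j+1) < w.symm j) ↔ (w.symm (j+1) < w.symm j) := by
        constructor
        · exact fun h => h.2
        · exact fun h => ⟨by omega, h⟩
      rw [if_congr this rfl rfl]
    rw [hn0, hnn, hrest]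
    ring
  -- negative part
  have hneg : ∑ i ∈ Finset.Icc (-(n:ℤ)) (-1),
      (if (i ≠ 0 ∧ w.symm (csucc n i) < w.symm i) then (1:ℤ) else 0) = cZ w (n:ℤ) := by
    have h0 : Finset.Icc (-(n:ℤ)) (-1) = insert (-1) (Finset.Icc (-(n:ℤ)) (-2)) := by
      ext x; simp only [Finset.mem_Icc, Finset.mem_insert]; omega
    have h0' : (-1:ℤ) ∉ Finset.Icc (-(n:ℤ)) (-2) := by simp [Finset.mem_Icc]
    rw [h0, Finset.sum_insert h0']
    have hm1 : (if ((-1:ℤ) ≠ 0 ∧ w.symm (csucc n (-1)) < w.symm (-1)) then (1:ℤ) else 0)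
        = 0 := by
      have hcs : csucc n (-1:ℤ) = 1 := by unfold csucc; rw [if_pos rfl]
      rw [hcs]
      have hneg1 : w.symm (-1:ℤ) = -(w.symm 1) := by
        have := hsps.1 1; simpa using this
      rw [if_neg]
      rw [hneg1]
      rintro ⟨-, hlt⟩
      omega
    rw [hm1]
    have hre : ∑ i ∈ Finset.Icc (-(n:ℤ)) (-2),
        (if (i ≠ 0 ∧ w.symm (csucc n i) < w.symm i) then (1:ℤ) else 0)
        = ∑ j ∈ Finset.Icc (1:ℤ) ((n:ℤ)-1),
            (if w.symm (j+1) < w.symm j then (1:ℤ) else 0) := by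
      apply Finset.sum_nbij' (fun i => -i - 1) (fun j => -j - 1)
      · intro i hi; rw [Finset.mem_Icc] at hi ⊢; omega
      · intro j hj; rw [Finset.mem_Icc] at hj ⊢; omega
      · intro i _; ring
      · intro j _; ring
      · intro i hi
        rw [Finset.mem_Icc] at hi
        have hcs : csucc n i = i + 1 := by
          unfold csucc; rw [if_neg (by omega), if_neg (by omega)]
        have harg : (-i - 1) + 1 = -i := by ring
        rw [hcs, harg]
        have e1 : w.symm (-i) = -(w.symm i) := hsps.1 i
        have e2 : w.symm (-i - 1) = -(w.symm (i+1)) := by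
          have h := hsps.1 (i+1)
          have harg2 : -(i+1) = -i - 1 := by ring
          rw [harg2] at h
          exact h
        have hiff : (i ≠ 0 ∧ w.symm (i+1) < w.symm i) ↔ (w.symm (-i) < w.symm (-i-1)) := by
          rw [e1, e2]
          omega
        rw [if_congr hiff rfl rfl]
    rw [hre]
    unfold cZ
    ring
  rw [hpos, hneg]
  ring

lemma classification (hn : 1 ≤ n) (hw : InXn n w) (hc : cdes n w.symm ≤ 2) :
    ∃ k : ℤ, YC n w k := by
  have hsp := hw.1
  have hsps := sp_symm hsp
  have hx := hw.2
  have hform := cdes_formula hn hsp hx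
  have hcz : cZ w (n:ℤ) = ((Finset.Icc (1:ℤ) ((n:ℤ)-1)).filter
      (fun j => w.symm (j+1) < w.symm j)).card := by
    unfold cZ
    rw [Finset.card_filter]
    push_cast
    rfl
  set S := (Finset.Icc (1:ℤ) ((n:ℤ)-1)).filter (fun j => w.symm (j+1) < w.symm j) with hS
  have hcard : S.card ≤ 1 := by
    have h2 : (cdes n w.symm : ℤ) ≤ 2 := by exact_mod_cast hc
    rw [hform, hcz] at h2
    split_ifs at h2 <;> omega
  have hasc : ∀ j, 1 ≤ j → j ≤ (n:ℤ) - 1 → j ∉ S → w.symm j < w.symm (j+1) := by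
    intro j h1 h2 hj
    rw [hS, Finset.mem_filter] at hj
    have hne : w.symm j ≠ w.symm (j+1) := by
      intro hcc
      have := w.symm.injective hcc
      omega
    have : ¬ (w.symm (j+1) < w.symm j) := by
      intro hcc; exact hj ⟨by rw [Finset.mem_Icc]; omega, hcc⟩
    omega
  interval_cases hcard' : S.card
  · -- no descents : k = n
    have hempty : S = ∅ := Finset.card_eq_zero.mp hcard'
    have hstep : ∀ j, 1 ≤ j → j ≤ (n:ℤ) - 1 → w.symm j < w.symm (j+1) := by
      intro j h1 h2
      exact hasc j h1 h2 (by rw [hempty]; simp)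
    have hmono := mono_of_steps (w.symm : ℤ → ℤ) 1 (n:ℤ) hstep
    refine ⟨(n:ℤ), hw, by exact_mod_cast hn, le_refl _, ?_, by intro i h1 h2; omega,
      fun i j h1 h2 h3 => hmono i j h1 h2 h3, by intro i j h1 h2 h3; omega⟩
    intro i h1 h2
    rcases eq_or_lt_of_le h1 with h|h
    · exact h ▸ hx
    · exact lt_trans hx (hmono 1 i (le_refl _) h h2)
  · -- one descent at k
    obtain ⟨k, hk⟩ := Finset.card_eq_one.mp hcard'
    have hkmem : k ∈ S := by rw [hk]; simp
    rw [hS, Finset.mem_filter, Finset.mem_Icc] at hkmem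
    obtain ⟨⟨hk1, hk2⟩, hkdesc⟩ := hkmem
    have hvn : w.symm (n:ℤ) < 0 := by
      have h2 : (cdes n w.symm : ℤ) ≤ 2 := by exact_mod_cast hc
      rw [hform, hcz] at h2
      have hnz : w.symm (n:ℤ) ≠ 0 := sp_ne_zero hsps (by omega)
      split_ifs at h2 <;> omega
    have hstep1 : ∀ j, 1 ≤ j → j ≤ k - 1 → w.symm j < w.symm (j+1) := by
      intro j h1 h2
      refine hasc j h1 (by omega) ?_
      rw [hk]; simp; omega
    have hstep2 : ∀ j, k+1 ≤ j → j ≤ (n:ℤ) - 1 → w.symm j < w.symm (j+1) := by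
      intro j h1 h2
      refine hasc j (by omega) h2 ?_
      rw [hk]; simp; omega
    have hmono1 := mono_of_steps (w.symm : ℤ → ℤ) 1 k hstep1
    have hmono2 := mono_of_steps (w.symm : ℤ → ℤ) (k+1) (n:ℤ) (by
      intro j h1 h2; exact hstep2 j h1 h2)
    refine ⟨k, hw, hk1, by omega, ?_, ?_, hmono1, fun i j h1 h2 h3 => hmono2 i j (by omega) h2 h3⟩
    · intro i h1 h2
      rcases eq_or_lt_of_le h1 with h|h
      · exact h ▸ hx
      · exact lt_trans hx (hmono1 1 i (le_refl _) h h2)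
    · intro i h1 h2
      rcases eq_or_lt_of_le h2 with h|h
      · rw [h]; exact hvn
      · exact lt_trans (hmono2 i (n:ℤ) (by omega) h (le_refl _)) hvn

lemma YC_cZ {k : ℤ} (h : YC n w k) {q : ℤ} (h1 : 1 ≤ q) (h2 : q ≤ (n:ℤ)) :
    cZ w q = if k + 1 ≤ q then 1 else 0 := by
  obtain ⟨hw, hk1, hkn, hpos, hneg, hm1, hm2⟩ := h
  unfold cZ
  have key : ∀ j ∈ Finset.Icc (1:ℤ) (q-1),
      (if w.symm (j+1) < w.symm j then (1:ℤ) else 0) = (if j = k then 1 else 0) := by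
    intro j hj
    rw [Finset.mem_Icc] at hj
    by_cases hjk : j = k
    · rw [if_pos hjk, if_pos]
      have ha : 0 < w.symm j := hpos j (by omega) (by omega)
      have hb : w.symm (j+1) < 0 := hneg (j+1) (by omega) (by omega)
      omega
    · rw [if_neg hjk, if_neg]
      by_cases hlt : j + 1 ≤ k
      · have := hm1 j (j+1) (by omega) (by omega) hlt
        omega
      · by_cases hgt : k + 1 ≤ j
        · have := hm2 j (j+1) (by omega) (by omega) (by omega)
          omega
        · -- j = k excluded, j < k+1 and j+1 > k : impossible
          omega
  rw [Finset.sum_congr rfl key]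
  rw [Finset.sum_ite_eq' (Finset.Icc (1:ℤ) (q-1)) k (fun _ => (1:ℤ))]
  have : (k ∈ Finset.Icc (1:ℤ) (q-1)) = (k + 1 ≤ q) := by
    simp only [Finset.mem_Icc, eq_iff_iff]
    constructor
    · intro hh; omega
    · intro hh; omega
  simp only [this]

lemma YC_cdes {k : ℤ} (hn : 1 ≤ n) (h : YC n w k) : cdes n w.symm ≤ 2 := by
  obtain ⟨hw, hk1, hkn, hpos, hneg, hm1, hm2⟩ := h
  have hform := cdes_formula hn hw.1 hw.2
  have hcz := YC_cZ (w := w) ⟨hw, hk1, hkn, hpos, hneg, hm1, hm2⟩ (le_trans hk1 hkn)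
    (le_refl (n:ℤ))
  have hfin : (cdes n w.symm : ℤ) ≤ 2 := by
    rw [hform, hcz]
    by_cases hkn' : k + 1 ≤ (n:ℤ)
    · have := hneg (n:ℤ) (by omega) (le_refl _)
      rw [if_pos hkn', if_neg (by omega)]
      omega
    · rw [if_neg hkn']
      split_ifs <;> omega
  exact_mod_cast hfin

lemma mono_gap (f : ℤ → ℤ) (a b : ℤ)
    (hmono : ∀ i j, a ≤ i → i < j → j ≤ b → f i < f j) :
    ∀ i j, a ≤ i → i ≤ j → j ≤ b → f i + (j - i) ≤ f j := by
  have H : ∀ t : ℕ, ∀ i j, a ≤ i → i ≤ j → j ≤ b → j - i = (t:ℤ) → f i + (j - i) ≤ f j := by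
    intro t
    induction t with
    | zero =>
      intro i j _ _ _ h4
      have hij : j = i := by omega
      subst hij
      omega
    | succ t ih =>
      intro i j h1 h2 h3 h4
      have h5 : f i + (j - 1 - i) ≤ f (j-1) := ih i (j-1) h1 (by omega) (by omega) (by omega)
      have h6 : f (j-1) < f j := hmono (j-1) j (by omega) (by omega) h3
      omega
  intro i j h1 h2 h3
  exact H (j - i).toNat i j h1 h2 h3 (by omega)

lemma YC_idx_le {k : ℤ} (h : YC n w k) {i : ℤ} (h1 : 1 ≤ i) (h2 : i ≤ k) :
    i ≤ w.symm i := by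
  obtain ⟨hw, hk1, hkn, hpos, hneg, hm1, hm2⟩ := h
  have := mono_gap (w.symm : ℤ → ℤ) 1 k hm1 1 i (le_refl _) h1 h2
  have := hpos 1 (le_refl _) (by omega)
  omega

lemma lemmaN {k₁ k₂ : ℤ} {w₁ w₂ : Equiv.Perm ℤ} (hn : 1 ≤ n)
    (h1 : YC n w₁ k₁) (h2 : YC n w₂ k₂) (hdom : Dom n w₁ w₂) :
    k₂ ≤ k₁ ∧ ∀ i : ℤ, 1 ≤ i → i ≤ k₂ → w₁.symm i ≤ w₂.symm i := by
  obtain ⟨hw1, hk11, hk1n, hpos1, hneg1, hm11, hm12⟩ := h1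
  obtain ⟨hw2, hk21, hk2n, hpos2, hneg2, hm21, hm22⟩ := h2
  have hY1 : YC n w₁ k₁ := ⟨hw1, hk11, hk1n, hpos1, hneg1, hm11, hm12⟩
  have hY2 : YC n w₂ k₂ := ⟨hw2, hk21, hk2n, hpos2, hneg2, hm21, hm22⟩
  have hsp1 := hw1.1
  have hsp2 := hw2.1
  have hsps1 := sp_symm hsp1
  have hsps2 := sp_symm hsp2
  have hkk : k₂ ≤ k₁ := by
    by_contra hcon
    push_neg at hcon
    have hq1 : (1:ℤ) ≤ k₁ + 1 := by omega
    have hq2 : k₁ + 1 ≤ (n:ℤ) := by omega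
    have e1 : w₁.symm (k₁+1) < 0 := hneg1 (k₁+1) (by omega) hq2
    have e2 : 0 < w₂.symm (k₁+1) := hpos2 (k₁+1) hq1 (by omega)
    have hA := hdom.1 (k₁+1) hq1 hq2
    simp only [AZ] at hA
    rw [YC_cZ hY1 hq1 hq2, YC_cZ hY2 hq1 hq2] at hA
    rw [if_pos (show k₁ + 1 ≤ k₁ + 1 by omega), if_neg (show ¬ (k₂ + 1 ≤ k₁ + 1) by omega),
      if_pos e1, if_neg (show ¬ (w₂.symm (k₁+1) < 0) by omega)] at hA
    omega
  refine ⟨hkk, ?_⟩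
  intro i hi1 hi2
  by_contra hcon
  push_neg at hcon
  set a : ℤ := w₁.symm i with hadef
  set a' : ℤ := w₂.symm i with ha'def
  have hia' : i ≤ a' := YC_idx_le hY2 hi1 hi2
  have hia : i < a := by omega
  have han : a ≤ (n:ℤ) := (sp_abs_le hsps1 (by omega) (by omega)).2
  set J : Finset ℤ := (Finset.Icc (k₁+1) (n:ℤ)).filter (fun j => -(w₁.symm j) < a)
    with hJdef
  -- |J| = a - i
  have hJcard : (J.card : ℤ) = a - i := by
    set T : Finset ℤ := (Finset.Icc (1:ℤ) (a-1)) \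
      ((Finset.Icc (1:ℤ) (i-1)).image (fun l => w₁.symm l)) with hTdef
    have himg : ((Finset.Icc (1:ℤ) (i-1)).image (fun l => w₁.symm l))
        ⊆ Finset.Icc (1:ℤ) (a-1) := by
      intro x hx
      rw [Finset.mem_image] at hx
      obtain ⟨l, hl, hlx⟩ := hx
      rw [Finset.mem_Icc] at hl
      rw [Finset.mem_Icc]
      have e1 : 0 < w₁.symm l := hpos1 l (by omega) (by omega)
      have e2 : w₁.symm l < a := hm11 l i (by omega) (by omega) (by omega)
      omega
    have hJT : J.card = T.card := by
      apply Finset.card_nbij' (fun j => -(w₁.symm j)) (fun x => w₁ (-x))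
      · intro j hj
        simp only [Finset.mem_coe] at hj ⊢
        rw [hJdef, Finset.mem_filter, Finset.mem_Icc] at hj
        obtain ⟨⟨hj1, hj2⟩, hj3⟩ := hj
        rw [hTdef, Finset.mem_sdiff, Finset.mem_Icc]
        have e1 : w₁.symm j < 0 := hneg1 j (by omega) hj2
        refine ⟨⟨by omega, by omega⟩, ?_⟩
        rw [Finset.mem_image]
        rintro ⟨l, hl, hlx⟩
        rw [Finset.mem_Icc] at hl
        have : l = -j := sp_inj_neg hsps1 (by omega)
        omega
      · intro x hx
        simp only [Finset.mem_coe] at hx ⊢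
        rw [hTdef, Finset.mem_sdiff, Finset.mem_Icc] at hx
        obtain ⟨⟨hx1, hx2⟩, hx3⟩ := hx
        have hvx : w₁.symm (w₁ x) = x := w₁.symm_apply_apply x
        have hp0 : w₁ x ≠ 0 := sp_ne_zero hsp1 (by omega)
        have hpb := sp_abs_le hsp1 (i := x) (by omega) (by omega)
        have hpneg : w₁ x < 0 := by
          by_contra hpp
          push_neg at hpp
          have hple : w₁ x ≤ k₁ := by
            by_contra hgt
            push_neg at hgt
            have := hneg1 (w₁ x) hgt (by omega)
            omega
          have hpi : w₁ x < i := by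
            by_contra hge
            push_neg at hge
            rcases eq_or_lt_of_le hge with h|h
            · rw [← h] at hvx; omega
            · have := hm11 i (w₁ x) hi1 h hple
              omega
          exact hx3 (Finset.mem_image.mpr ⟨w₁ x, Finset.mem_Icc.mpr ⟨by omega, by omega⟩, hvx⟩)
        have hwnx : w₁ (-x) = -(w₁ x) := hsp1.1 x
        rw [hJdef, Finset.mem_filter, Finset.mem_Icc, hwnx]
        have hvnx : w₁.symm (-(w₁ x)) = -x := by
          rw [hsps1.1, hvx]
        have hknx : k₁ < -(w₁ x) := by
          by_contra hle
          push_neg at hle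
          have := hpos1 (-(w₁ x)) (by omega) (by omega)
          omega
        refine ⟨⟨by omega, by omega⟩, ?_⟩
        rw [hvnx]
        omega
      · intro j hj
        beta_reduce
        rw [neg_neg]
        exact w₁.apply_symm_apply j
      · intro x hx
        have hwnx : w₁ (-x) = -(w₁ x) := hsp1.1 x
        beta_reduce
        rw [hwnx]
        have : w₁.symm (-(w₁ x)) = -x := by
          rw [hsps1.1, w₁.symm_apply_apply]
        rw [this]
        ring
    have hTcard : (T.card : ℤ) = a - i := by
      rw [hTdef, Finset.card_sdiff_of_subset himg]
      have hic : ((Finset.Icc (1:ℤ) (a-1)).card : ℤ) = a - 1 := by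
        rw [Int.card_Icc]
        omega
      have himgc : (((Finset.Icc (1:ℤ) (i-1)).image (fun l => w₁.symm l)).card : ℤ)
          = i - 1 := by
        rw [Finset.card_image_of_injOn (fun x _ y _ h => w₁.symm.injective h)]
        rw [Int.card_Icc]
        omega
      have hle := Finset.card_le_card himg
      push_cast [Nat.cast_sub hle]
      omega
    rw [hJT, hTcard]
  -- every j ∈ J has small complement value in w₂ as well
  have hJ2 : ∀ j ∈ J, 1 ≤ -(w₂.symm j) ∧ -(w₂.symm j) < a' := by
    intro j hj
    rw [hJdef, Finset.mem_filter, Finset.mem_Icc] at hj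
    obtain ⟨⟨hj1, hj2⟩, hj3⟩ := hj
    have e2 : w₂.symm j < 0 := hneg2 j (by omega) hj2
    have e1 : w₁.symm j < 0 := hneg1 j (by omega) hj2
    have hB := hdom.2 i j hi1 (by omega) hj2
    simp only [BZ] at hB
    rw [YC_cZ hY1 hi1 (by omega), YC_cZ hY1 (by omega) hj2,
      YC_cZ hY2 hi1 (by omega), YC_cZ hY2 (by omega) hj2] at hB
    rw [if_neg (show ¬ (k₁ + 1 ≤ i) by omega), if_pos (show k₁ + 1 ≤ j by omega),
      if_neg (show ¬ (k₂ + 1 ≤ i) by omega), if_pos (show k₂ + 1 ≤ j by omega),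
      if_neg (show ¬ (w₁.symm i + w₁.symm j < 0) by omega)] at hB
    have hne : w₂.symm i ≠ -(w₂.symm j) := by
      intro hcc
      have := sp_inj_neg hsps2 hcc
      omega
    split_ifs at hB <;> omega
  -- final pigeonhole
  set S1 : Finset ℤ := (Finset.Icc (1:ℤ) i).image (fun l => w₂.symm l) with hS1
  set S2 : Finset ℤ := J.image (fun j => -(w₂.symm j)) with hS2
  have hcard1 : S1.card = (Finset.Icc (1:ℤ) i).card :=
    Finset.card_image_of_injOn (fun x _ y _ h => w₂.symm.injective h)
  have hcard2 : S2.card = J.card :=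
    Finset.card_image_of_injOn (fun x _ y _ h => w₂.symm.injective (neg_injective h))
  have hdisj12 : Disjoint S1 S2 := by
    rw [Finset.disjoint_left]
    intro x hx1 hx2
    rw [hS1, Finset.mem_image] at hx1
    rw [hS2, Finset.mem_image] at hx2
    obtain ⟨l, hl, hlx⟩ := hx1
    obtain ⟨j, hj, hjx⟩ := hx2
    rw [Finset.mem_Icc] at hl
    have hcc : w₂.symm l = -(w₂.symm j) := by omega
    have := sp_inj_neg hsps2 hcc
    rw [hJdef, Finset.mem_filter, Finset.mem_Icc] at hj
    omega
  have hsub : S1 ∪ S2 ⊆ Finset.Icc (1:ℤ) a' := by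
    intro x hx
    rw [Finset.mem_union] at hx
    rw [Finset.mem_Icc]
    rcases hx with hx | hx
    · rw [hS1, Finset.mem_image] at hx
      obtain ⟨l, hl, hlx⟩ := hx
      rw [Finset.mem_Icc] at hl
      have e1 : 0 < w₂.symm l := hpos2 l (by omega) (by omega)
      have e2 : w₂.symm l ≤ a' := by
        rcases eq_or_lt_of_le hl.2 with h|h
        · rw [h]
        · exact le_of_lt (hm21 l i (by omega) h hi2)
      omega
    · rw [hS2, Finset.mem_image] at hx
      obtain ⟨j, hj, hjx⟩ := hx
      have := hJ2 j hj
      omega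
  have hcardle := Finset.card_le_card hsub
  rw [Finset.card_union_of_disjoint hdisj12, hcard1, hcard2] at hcardle
  have hIa : (((Finset.Icc (1:ℤ) a')).card : ℤ) = a' := by
    rw [Int.card_Icc]; omega
  have hIi : (((Finset.Icc (1:ℤ) i)).card : ℤ) = i := by
    rw [Int.card_Icc]; omega
  have hfin : ((Finset.Icc (1:ℤ) i).card : ℤ) + (J.card : ℤ)
      ≤ ((Finset.Icc (1:ℤ) a').card : ℤ) := by exact_mod_cast hcardle
  omega

lemma sp_mul (hsp : IsSignedPerm n w) (t : Equiv.Perm ℤ)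
    (hodd : ∀ x : ℤ, t (-x) = - t x) (hfix : ∀ x : ℤ, (n:ℤ) < |x| → t x = x) :
    IsSignedPerm n (w * t) := by
  constructor
  · intro i
    have h1 : (w * t) (-i) = w (t (-i)) := rfl
    have h2 : (w * t) i = w (t i) := rfl
    rw [h1, h2, hodd, hsp.1]
  · intro i hi
    have h1 : (w * t) i = w (t i) := rfl
    rw [h1, hfix i hi, hsp.2 i hi]

lemma swap_pair_odd {m : ℤ} (hm : 1 ≤ m) (x : ℤ) :
    (Equiv.swap m (m+1) * Equiv.swap (-m) (-(m+1))) (-x)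
      = - (Equiv.swap m (m+1) * Equiv.swap (-m) (-(m+1))) x := by
  have h1 : ∀ z : ℤ, (Equiv.swap m (m+1) * Equiv.swap (-m) (-(m+1))) z
      = Equiv.swap m (m+1) (Equiv.swap (-m) (-(m+1)) z) := fun z => rfl
  rw [h1, h1]
  simp only [Equiv.swap_apply_def]
  split_ifs <;> omega

lemma swap_pair_fix {m : ℤ} (hm : 1 ≤ m) (hmn : m + 1 ≤ (n:ℤ)) (x : ℤ)
    (hx : (n:ℤ) < |x|) :
    (Equiv.swap m (m+1) * Equiv.swap (-m) (-(m+1))) x = x := by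
  have hx' : x < -(n:ℤ) ∨ (n:ℤ) < x := by
    rcases abs_cases x with ⟨h, _⟩ | ⟨h, _⟩ <;> omega
  have h1 : (Equiv.swap m (m+1) * Equiv.swap (-m) (-(m+1))) x
      = Equiv.swap m (m+1) (Equiv.swap (-m) (-(m+1)) x) := rfl
  rw [h1]
  simp only [Equiv.swap_apply_def]
  split_ifs <;> omega

set_option maxHeartbeats 1600000 in
lemma swap_pair_invol {m : ℤ} (hm : 1 ≤ m) :
    (Equiv.swap m (m+1) * Equiv.swap (-m) (-(m+1)))
      * (Equiv.swap m (m+1) * Equiv.swap (-m) (-(m+1))) = 1 := by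
  apply Equiv.ext
  intro x
  have h1 : ∀ z : ℤ, (Equiv.swap m (m+1) * Equiv.swap (-m) (-(m+1))) z
      = Equiv.swap m (m+1) (Equiv.swap (-m) (-(m+1)) z) := fun z => rfl
  have h2 : ((Equiv.swap m (m+1) * Equiv.swap (-m) (-(m+1)))
      * (Equiv.swap m (m+1) * Equiv.swap (-m) (-(m+1)))) x
      = (Equiv.swap m (m+1) * Equiv.swap (-m) (-(m+1)))
        ((Equiv.swap m (m+1) * Equiv.swap (-m) (-(m+1))) x) := rfl
  rw [h2, h1, h1]
  simp only [Equiv.swap_apply_def, Equiv.Perm.one_apply]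
  split_ifs <;> omega

lemma swap_last_odd (x : ℤ) :
    (Equiv.swap (n:ℤ) (-(n:ℤ))) (-x) = - (Equiv.swap (n:ℤ) (-(n:ℤ))) x := by
  simp only [Equiv.swap_apply_def]
  split_ifs <;> omega

lemma swap_last_fix (x : ℤ) (hx : (n:ℤ) < |x|) :
    (Equiv.swap (n:ℤ) (-(n:ℤ))) x = x := by
  have hx' : x < -(n:ℤ) ∨ (n:ℤ) < x := by
    rcases abs_cases x with ⟨h, _⟩ | ⟨h, _⟩ <;> omega
  simp only [Equiv.swap_apply_def]
  split_ifs <;> omega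

lemma stepS1 {k i m j : ℤ} (hn : 1 ≤ n) (hY : YC n w k)
    (hi1 : 1 ≤ i) (hik : i ≤ k) (hm : w.symm i = m) (hmn : m + 1 ≤ (n:ℤ))
    (hj1 : k < j) (hjn : j ≤ (n:ℤ)) (hj : w.symm j = -(m+1)) :
    ∃ w' : Equiv.Perm ℤ, covRel n w w' ∧ YC n w' k ∧
      w'.symm i = m + 1 ∧ (∀ l : ℤ, 1 ≤ l → l ≤ (n:ℤ) → l ≠ i → l ≠ j → w'.symm l = w.symm l) ∧
      w'.symm j = -m := by
  obtain ⟨hw, hk1, hkn, hpos, hneg, hm1, hm2⟩ := hY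
  have hsp := hw.1
  have hsps := sp_symm hsp
  have hm0 : 1 ≤ m := by
    have := hpos i hi1 hik
    omega
  set t : Equiv.Perm ℤ := Equiv.swap m (m+1) * Equiv.swap (-m) (-(m+1)) with htdef
  set w' : Equiv.Perm ℤ := w * t with hw'def
  have hvu : ∀ x : ℤ, w'.symm x =
      (if w.symm x = m then m+1 else if w.symm x = m+1 then m
      else if w.symm x = -m then -(m+1) else if w.symm x = -(m+1) then -m
      else w.symm x) := by
    intro x
    have h1 : w'.symm x = Equiv.swap (-m) (-(m+1)) (Equiv.swap m (m+1) (w.symm x)) := rfl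
    rw [h1]
    simp only [Equiv.swap_apply_def]
    split_ifs <;> omega
  have hvi : w'.symm i = m + 1 := by rw [hvu, hm, if_pos rfl]
  have hvj : w'.symm j = -m := by
    rw [hvu, hj]
    rw [if_neg (by omega), if_neg (by omega), if_neg (by omega), if_pos rfl]
  have hgen : ∀ l : ℤ, 1 ≤ l → l ≤ (n:ℤ) → l ≠ i → l ≠ j → w'.symm l = w.symm l := by
    intro l hl1 hln hli hlj
    have e1 : w.symm l ≠ m := by
      intro hcc
      exact hli (w.symm.injective (by rw [hcc, hm]))
    have e4 : w.symm l ≠ -(m+1) := by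
      intro hcc
      exact hlj (w.symm.injective (by rw [hcc, hj]))
    have e2 : w.symm l ≠ m+1 := by
      intro hcc
      have hcc2 : w.symm l = -(w.symm j) := by omega
      have := sp_inj_neg hsps hcc2
      omega
    have e3 : w.symm l ≠ -m := by
      intro hcc
      have hcc2 : w.symm l = -(w.symm i) := by omega
      have := sp_inj_neg hsps hcc2
      omega
    rw [hvu, if_neg e1, if_neg e2, if_neg e3, if_neg e4]
  have hsp' : IsSignedPerm n w' :=
    sp_mul hsp t (swap_pair_odd hm0) (fun x hx => swap_pair_fix hm0 hmn x hx)
  have hx1' : 0 < w'.symm 1 := by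
    by_cases h1i : (1:ℤ) = i
    · rw [← h1i] at hvi; omega
    · have h1j : (1:ℤ) ≠ j := by omega
      rw [hgen 1 (le_refl _) (by omega) h1i h1j]
      exact hw.2
  have hIn' : InXn n w' := ⟨hsp', hx1'⟩
  have hYC' : YC n w' k := by
    refine ⟨hIn', hk1, hkn, ?_, ?_, ?_, ?_⟩
    · intro l hl1 hlk
      by_cases hli : l = i
      · rw [hli, hvi]; omega
      · rw [hgen l hl1 (by omega) hli (by omega)]
        exact hpos l hl1 hlk
    · intro l hl1 hln
      by_cases hlj : l = j
      · rw [hlj, hvj]; omega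
      · rw [hgen l (by omega) hln (by omega) hlj]
        exact hneg l hl1 hln
    · intro l l' hl1 hll' hl'k
      by_cases hli : l = i
      · subst hli
        rw [hvi, hgen l' (by omega) (by omega) (by omega) (by omega)]
        have e1 : m < w.symm l' := by
          have := hm1 l l' hl1 hll' hl'k
          omega
        have e2 : w.symm l' ≠ m + 1 := by
          intro hcc
          have hcc2 : w.symm l' = -(w.symm j) := by omega
          have := sp_inj_neg hsps hcc2
          omega
        omega
      · by_cases hl'i : l' = i
        · subst hl'i
          rw [hvi, hgen l hl1 (by omega) hli (by omega)]
          have := hm1 l l' hl1 hll' (by omega)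
          omega
        · rw [hgen l hl1 (by omega) hli (by omega),
            hgen l' (by omega) (by omega) hl'i (by omega)]
          exact hm1 l l' hl1 hll' hl'k
    · intro l l' hl1 hll' hl'n
      by_cases hlj : l = j
      · subst hlj
        rw [hvj, hgen l' (by omega) hl'n (by omega) (by omega)]
        have e1 : -(m+1) < w.symm l' := by
          have := hm2 l l' hl1 hll' hl'n
          omega
        have e2 : w.symm l' ≠ -m := by
          intro hcc
          have hcc2 : w.symm l' = -(w.symm i) := by omega
          have := sp_inj_neg hsps hcc2
          omega
        omega
      · by_cases hl'j : l' = j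
        · subst hl'j
          rw [hvj, hgen l (by omega) (by omega) (by omega) hlj]
          have := hm2 l l' hl1 hll' hl'n
          omega
        · rw [hgen l (by omega) (by omega) (by omega) hlj,
            hgen l' (by omega) hl'n (by omega) hl'j]
          exact hm2 l l' hl1 hll' hl'n
  refine ⟨w', ⟨hw, hIn', Or.inr (Or.inl ⟨m, hm0, by omega, ?_, ?_⟩)⟩, hYC', hvi, hgen, hvj⟩
  · -- Lll (w' m) (w' (m+1))
    have hwm : w m = i := (symm_eq_imp w hm).symm
    have hwm1 : w (m+1) = -j := by
      have h3 := symm_eq_imp w hj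
      have h4 : w (-(m+1)) = -(w (m+1)) := hsp.1 (m+1)
      omega
    have htm : t m = m + 1 := by
      have h1 : t m = Equiv.swap m (m+1) (Equiv.swap (-m) (-(m+1)) m) := rfl
      rw [h1]
      simp only [Equiv.swap_apply_def]
      split_ifs <;> omega
    have htm1 : t (m+1) = m := by
      have h1 : t (m+1) = Equiv.swap m (m+1) (Equiv.swap (-m) (-(m+1)) (m+1)) := rfl
      rw [h1]
      simp only [Equiv.swap_apply_def]
      split_ifs <;> omega
    have e1 : w' m = w (t m) := rfl
    have e2 : w' (m+1) = w (t (m+1)) := rfl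
    rw [e1, e2, htm, htm1, hwm, hwm1]
    exact ⟨-1, by omega, by omega, by omega⟩
  · -- w = w' * t
    rw [hw'def, mul_assoc, swap_pair_invol hm0, mul_one]

lemma stepS2 {k : ℤ} (hn : 1 ≤ n) (hY : YC n w k) (hk2 : 2 ≤ k)
    (hvk : w.symm k = (n:ℤ)) :
    ∃ w' : Equiv.Perm ℤ, covRel n w w' ∧ YC n w' (k-1) ∧
      (∀ l : ℤ, 1 ≤ l → l ≤ (n:ℤ) → l ≠ k → w'.symm l = w.symm l) ∧
      w'.symm k = -(n:ℤ) := by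
  obtain ⟨hw, hk1, hkn, hpos, hneg, hm1, hm2⟩ := hY
  have hsp := hw.1
  have hsps := sp_symm hsp
  set w' : Equiv.Perm ℤ := w * Equiv.swap (n:ℤ) (-(n:ℤ)) with hw'def
  have hvu : ∀ x : ℤ, w'.symm x =
      (if w.symm x = (n:ℤ) then -(n:ℤ) else if w.symm x = -(n:ℤ) then (n:ℤ)
      else w.symm x) := by
    intro x
    have h1 : w'.symm x = Equiv.swap (n:ℤ) (-(n:ℤ)) (w.symm x) := rfl
    rw [h1]
    simp only [Equiv.swap_apply_def]
    all_goals split_ifs <;> omega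
  have hvk' : w'.symm k = -(n:ℤ) := by rw [hvu, hvk, if_pos rfl]
  have hgen : ∀ l : ℤ, 1 ≤ l → l ≤ (n:ℤ) → l ≠ k → w'.symm l = w.symm l := by
    intro l hl1 hln hlk
    have e1 : w.symm l ≠ (n:ℤ) := by
      intro hcc
      exact hlk (w.symm.injective (by rw [hcc, hvk]))
    have e2 : w.symm l ≠ -(n:ℤ) := by
      intro hcc
      have hcc2 : w.symm l = -(w.symm k) := by omega
      have := sp_inj_neg hsps hcc2
      omega
    rw [hvu, if_neg e1, if_neg e2]
  have hsp' : IsSignedPerm n w' :=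
    sp_mul hsp _ swap_last_odd (fun x hx => swap_last_fix x hx)
  have hx1' : 0 < w'.symm 1 := by
    rw [hgen 1 (le_refl _) (by omega) (by omega)]
    exact hw.2
  have hIn' : InXn n w' := ⟨hsp', hx1'⟩
  have hbound : ∀ l : ℤ, 1 ≤ l → l ≤ (n:ℤ) → -(n:ℤ) ≤ w.symm l ∧ w.symm l ≤ (n:ℤ) :=
    fun l h1 h2 => sp_abs_le hsps (by omega) (by omega)
  have hYC' : YC n w' (k-1) := by
    refine ⟨hIn', by omega, by omega, ?_, ?_, ?_, ?_⟩
    · intro l hl1 hlk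
      rw [hgen l hl1 (by omega) (by omega)]
      exact hpos l hl1 (by omega)
    · intro l hl1 hln
      by_cases hlk : l = k
      · rw [hlk, hvk']; omega
      · rw [hgen l (by omega) hln hlk]
        by_cases hlk2 : l ≤ k
        · omega
        · exact hneg l (by omega) hln
    · intro l l' hl1 hll' hl'k
      rw [hgen l hl1 (by omega) (by omega), hgen l' (by omega) (by omega) (by omega)]
      exact hm1 l l' hl1 hll' (by omega)
    · intro l l' hl1 hll' hl'n
      by_cases hlk : l = k
      · subst hlk
        rw [hvk', hgen l' (by omega) hl'n (by omega)]
        have e1 := (hbound l' (by omega) hl'n).1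
        have e2 : w.symm l' ≠ -(n:ℤ) := by
          intro hcc
          have hcc2 : w.symm l' = -(w.symm l) := by omega
          have := sp_inj_neg hsps hcc2
          omega
        omega
      · rw [hgen l (by omega) (by omega) hlk, hgen l' (by omega) hl'n (by omega)]
        exact hm2 l l' (by omega) hll' hl'n
  refine ⟨w', ⟨hw, hIn', Or.inr (Or.inr ⟨?_, ?_⟩)⟩, hYC', hgen, hvk'⟩
  · -- w' n ≤ -2
    have hwn : w (n:ℤ) = k := (symm_eq_imp w hvk).symm
    have e1 : w' (n:ℤ) = w (Equiv.swap (n:ℤ) (-(n:ℤ)) (n:ℤ)) := rfl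
    rw [e1, Equiv.swap_apply_left]
    have e2 : w (-(n:ℤ)) = -(w (n:ℤ)) := hsp.1 (n:ℤ)
    omega
  · rw [hw'def, mul_assoc, Equiv.swap_mul_self, mul_one]

lemma perm_eq_of_window {w₁ w₂ : Equiv.Perm ℤ} (hsp1 : IsSignedPerm n w₁)
    (hsp2 : IsSignedPerm n w₂)
    (h : ∀ i : ℤ, 1 ≤ i → i ≤ (n:ℤ) → w₁.symm i = w₂.symm i) : w₁ = w₂ := by
  have hsps1 := sp_symm hsp1
  have hsps2 := sp_symm hsp2
  have hs : w₁.symm = w₂.symm := by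
    apply Equiv.ext
    intro x
    rcases lt_trichotomy x 0 with hx | hx | hx
    · by_cases hxn : -(n:ℤ) ≤ x
      · have e1 : w₁.symm (-(-x)) = -(w₁.symm (-x)) := hsps1.1 (-x)
        have e2 : w₂.symm (-(-x)) = -(w₂.symm (-x)) := hsps2.1 (-x)
        have e3 := h (-x) (by omega) (by omega)
        simp only [neg_neg] at e1 e2
        omega
      · rw [hsps1.2 x (by rcases abs_cases x with ⟨h1,_⟩|⟨h1,_⟩ <;> omega),
          hsps2.2 x (by rcases abs_cases x with ⟨h1,_⟩|⟨h1,_⟩ <;> omega)]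
    · rw [hx, sp_zero hsps1, sp_zero hsps2]
    · by_cases hxn : x ≤ (n:ℤ)
      · exact h x (by omega) hxn
      · rw [hsps1.2 x (by rcases abs_cases x with ⟨h1,_⟩|⟨h1,_⟩ <;> omega),
          hsps2.2 x (by rcases abs_cases x with ⟨h1,_⟩|⟨h1,_⟩ <;> omega)]
  have := congrArg Equiv.symm hs
  simpa using this

lemma YC_nlt {k : ℤ} {w₁ w₂ : Equiv.Perm ℤ} (h1 : YC n w₁ k) (h2 : YC n w₂ k)
    (hag : ∀ i : ℤ, 1 ≤ i → i ≤ k → w₁.symm i = w₂.symm i)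
    {l : ℤ} (hl1 : k < l) (hl2 : l ≤ (n:ℤ))
    (htail : ∀ l' : ℤ, l < l' → l' ≤ (n:ℤ) → w₁.symm l' = w₂.symm l') :
    ¬ (w₁.symm l < w₂.symm l) := by
  obtain ⟨hw1, hk1, hkn, hpos1, hneg1, hm11, hm12⟩ := h1
  obtain ⟨hw2, _, _, hpos2, hneg2, hm21, hm22⟩ := h2
  have hsp1 := hw1.1
  have hsps1 := sp_symm hsp1
  have hsps2 := sp_symm hw2.1
  intro hlt
  set y : ℤ := w₂.symm l with hydef
  have hy0 : y < 0 := hneg2 l hl1 hl2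
  have hyb := sp_abs_le hsps2 (i := l) (by omega) (by omega)
  have hvp : w₁.symm (w₁ y) = y := w₁.symm_apply_apply y
  have hp0 : w₁ y ≠ 0 := sp_ne_zero hsp1 (by omega)
  have hpb := sp_abs_le hsp1 (i := y) (by omega) (by omega)
  rcases lt_trichotomy (w₁ y) 0 with hp | hp | hp
  · -- w₁ y < 0 : then -(w₁ y) ∈ [1,k] and values contradict
    have e1 : w₁.symm (-(w₁ y)) = -y := by
      rw [hsps1.1, hvp]
    have e2 : -(w₁ y) ≤ k := by
      by_contra hgt
      push_neg at hgt
      have := hneg1 (-(w₁ y)) hgt (by omega)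
      omega
    have e3 := hag (-(w₁ y)) (by omega) e2
    have e4 : w₂.symm (-(w₁ y)) = -y := by omega
    have e5 : w₂.symm (-(w₁ y)) = w₂.symm (-l) := by
      have : w₂.symm (-l) = -(w₂.symm l) := hsps2.1 l
      omega
    have := w₂.symm.injective e5
    omega
  · omega
  · -- w₁ y > 0
    have hple : ¬ (w₁ y ≤ k) := by
      intro hle
      have := hpos1 (w₁ y) (by omega) hle
      omega
    push_neg at hple
    have hpl : l < w₁ y := by
      rcases lt_trichotomy (w₁ y) l with h | h | h
      · have := hm12 (w₁ y) l hple h hl2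
        omega
      · rw [h] at hvp; omega
      · exact h
    have e1 := htail (w₁ y) hpl (by omega)
    have e2 : w₂.symm (w₁ y) = w₂.symm l := by omega
    have := w₂.symm.injective e2
    omega

lemma YC_unique {k : ℤ} {w₁ w₂ : Equiv.Perm ℤ} (h1 : YC n w₁ k) (h2 : YC n w₂ k)
    (hag : ∀ i : ℤ, 1 ≤ i → i ≤ k → w₁.symm i = w₂.symm i) : w₁ = w₂ := by
  have hag2 : ∀ i : ℤ, 1 ≤ i → i ≤ k → w₂.symm i = w₁.symm i :=
    fun i a b => (hag i a b).symm
  have key : ∀ d : ℕ, ∀ l : ℤ, k < l → l ≤ (n:ℤ) → (n:ℤ) - l = d →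
      w₁.symm l = w₂.symm l := by
    intro d
    induction d using Nat.strong_induction_on with
    | _ d ih =>
      intro l hl1 hl2 hld
      have htail : ∀ l' : ℤ, l < l' → l' ≤ (n:ℤ) → w₁.symm l' = w₂.symm l' := by
        intro l' ha hb
        exact ih ((n:ℤ) - l').toNat (by omega) l' (by omega) hb (by omega)
      have htail2 : ∀ l' : ℤ, l < l' → l' ≤ (n:ℤ) → w₂.symm l' = w₁.symm l' :=
        fun l' a b => (htail l' a b).symm
      have hn1 := YC_nlt h1 h2 hag hl1 hl2 htail
      have hn2 := YC_nlt h2 h1 hag2 hl1 hl2 htail2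
      omega
  apply perm_eq_of_window h1.1.1 h2.1.1
  intro i hi1 hi2
  by_cases hik : i ≤ k
  · exact hag i hi1 hik
  · exact key ((n:ℤ) - i).toNat i (by omega) hi2 (by omega)

/-- measure for the chain construction -/
noncomputable def measS (n : ℕ) (w : Equiv.Perm ℤ) (k : ℤ) : ℤ :=
  k * ((n:ℤ)+1) + ∑ l ∈ Finset.Icc (1:ℤ) k, ((n:ℤ) - w.symm l)

lemma measS_nonneg {k : ℤ} (hY : YC n w k) : 0 ≤ measS n w k := by
  obtain ⟨hw, hk1, hkn, hpos, hneg, hm1, hm2⟩ := hY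
  have hsps := sp_symm hw.1
  have h1 : 0 ≤ ∑ l ∈ Finset.Icc (1:ℤ) k, ((n:ℤ) - w.symm l) := by
    apply Finset.sum_nonneg
    intro l hl
    rw [Finset.mem_Icc] at hl
    have := (sp_abs_le hsps (i := l) (by omega) (by omega)).2
    omega
  have h2 : 0 ≤ k * ((n:ℤ)+1) := by positivity
  unfold measS
  omega

lemma lemmaS (hn : 1 ≤ n) : ∀ N : ℕ, ∀ w₁ w₂ : Equiv.Perm ℤ, ∀ k₁ k₂ : ℤ,
    YC n w₁ k₁ → YC n w₂ k₂ → k₂ ≤ k₁ →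
    (∀ i : ℤ, 1 ≤ i → i ≤ k₂ → w₁.symm i ≤ w₂.symm i) →
    measS n w₁ k₁ ≤ (N : ℤ) →
    Relation.ReflTransGen (covRel n) w₁ w₂ := by
  intro N
  induction N with
  | zero =>
    intro w₁ w₂ k₁ k₂ hY1 hY2 hkk hle hmeas
    exfalso
    obtain ⟨hw, hk1, hkn, hpos, hneg, hm1, hm2⟩ := hY1
    have hnn : 0 ≤ ∑ l ∈ Finset.Icc (1:ℤ) k₁, ((n:ℤ) - w₁.symm l) := by
      apply Finset.sum_nonneg
      intro l hl
      rw [Finset.mem_Icc] at hl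
      have := (sp_abs_le (sp_symm hw.1) (i := l) (by omega) (by omega)).2
      omega
    unfold measS at hmeas
    have hprod : (1:ℤ) * 2 ≤ k₁ * ((n:ℤ)+1) :=
      mul_le_mul (by omega) (by omega) (by omega) (by omega)
    omega
  | succ N ih =>
    intro w₁ w₂ k₁ k₂ hY1 hY2 hkk hle hmeas
    have hYY1 := hY1
    obtain ⟨hw1, hk11, hk1n, hpos1, hneg1, hm11, hm12⟩ := hY1
    have hYY2 := hY2
    obtain ⟨hw2, hk21, hk2n, hpos2, hneg2, hm21, hm22⟩ := hY2
    have hsp1 := hw1.1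
    have hsps1 := sp_symm hsp1
    have hsps2 := sp_symm hw2.1
    -- helper : a value m < n currently positive at position i, with m+1 negative somewhere,
    -- can be bumped
    have hfindj : ∀ i m : ℤ, 1 ≤ i → i ≤ k₁ → w₁.symm i = m → m + 1 ≤ (n:ℤ) →
        (∀ p : ℤ, 1 ≤ p → p ≤ k₁ → w₁.symm p ≠ m + 1) →
        ∃ j : ℤ, k₁ < j ∧ j ≤ (n:ℤ) ∧ w₁.symm j = -(m+1) := by
      intro i m hi1 hik hvim hmn hnotpos
      have hm0 : 1 ≤ m := by
        have := hpos1 i hi1 hik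
        omega
      set p : ℤ := w₁ (m+1) with hpdef
      have hvp : w₁.symm p = m + 1 := by rw [hpdef, w₁.symm_apply_apply]
      have hp0 : p ≠ 0 := sp_ne_zero hsp1 (by omega)
      have hpb := sp_abs_le hsp1 (i := m+1) (by omega) (by omega)
      have hpneg : p < 0 := by
        rcases lt_trichotomy p 0 with h | h | h
        · exact h
        · omega
        · exfalso
          by_cases hpk : p ≤ k₁
          · exact hnotpos p (by omega) hpk hvp
          · push_neg at hpk
            have := hneg1 p hpk (by omega)
            omega
      refine ⟨-p, ?_, by omega, ?_⟩
      · by_contra hle2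
        push_neg at hle2
        have := hpos1 (-p) (by omega) hle2
        have e1 : w₁.symm (-p) = -(m+1) := by
          rw [hsps1.1, hvp]
        omega
      · rw [hsps1.1, hvp]
    -- measure decrease for an S1 step at position i
    have hmeasS1 : ∀ (w' : Equiv.Perm ℤ) (i : ℤ), 1 ≤ i → i ≤ k₁ →
        w'.symm i = w₁.symm i + 1 →
        (∀ l : ℤ, 1 ≤ l → l ≤ k₁ → l ≠ i → w'.symm l = w₁.symm l) →
        measS n w' k₁ = measS n w₁ k₁ - 1 := by
      intro w' i hi1 hik hvi hvl
      unfold measS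
      have key : ∀ l ∈ Finset.Icc (1:ℤ) k₁,
          ((n:ℤ) - w'.symm l) = ((n:ℤ) - w₁.symm l) - (if l = i then 1 else 0) := by
        intro l hl
        rw [Finset.mem_Icc] at hl
        by_cases hli : l = i
        · subst hli
          rw [hvi, if_pos rfl]
          ring
        · rw [hvl l hl.1 hl.2 hli, if_neg hli]
          ring
      rw [Finset.sum_congr rfl key, Finset.sum_sub_distrib]
      rw [Finset.sum_ite_eq' (Finset.Icc (1:ℤ) k₁) i (fun _ => (1:ℤ))]
      rw [if_pos (Finset.mem_Icc.mpr ⟨hi1, hik⟩)]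
      ring
    by_cases hkcase : k₂ < k₁
    · -- Phase A : reduce k₁
      by_cases hmtop : w₁.symm k₁ = (n:ℤ)
      · -- flip the top value n
        obtain ⟨w', hcov, hYC', hgen', hvk'⟩ := stepS2 hn hYY1 (by omega) hmtop
        have hmeas' : measS n w' (k₁ - 1) = measS n w₁ k₁ - ((n:ℤ)+1) := by
          unfold measS
          have hsplit : Finset.Icc (1:ℤ) k₁ = insert k₁ (Finset.Icc (1:ℤ) (k₁-1)) := by
            ext x; simp only [Finset.mem_Icc, Finset.mem_insert]; omega
          have hnotmem : k₁ ∉ Finset.Icc (1:ℤ) (k₁-1) := by simp [Finset.mem_Icc]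
          rw [hsplit, Finset.sum_insert hnotmem, hmtop]
          have hcongr : ∀ l ∈ Finset.Icc (1:ℤ) (k₁-1),
              ((n:ℤ) - w'.symm l) = ((n:ℤ) - w₁.symm l) := by
            intro l hl
            rw [Finset.mem_Icc] at hl
            rw [hgen' l hl.1 (by omega) (by omega)]
          rw [Finset.sum_congr rfl hcongr]
          ring
        have hrec : Relation.ReflTransGen (covRel n) w' w₂ := by
          apply ih w' w₂ (k₁ - 1) k₂ hYC' hYY2 (by omega)
          · intro l hl1 hl2
            rw [hgen' l hl1 (by omega) (by omega)]
            exact hle l hl1 hl2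
          · rw [hmeas']
            push_cast
            omega
        exact Relation.ReflTransGen.head hcov hrec
      · -- raise the top value towards n
        set m : ℤ := w₁.symm k₁ with hmdef
        have hmn : m + 1 ≤ (n:ℤ) := by
          have := (sp_abs_le hsps1 (i := k₁) (by omega) (by omega)).2
          omega
        have hnotpos : ∀ p : ℤ, 1 ≤ p → p ≤ k₁ → w₁.symm p ≠ m + 1 := by
          intro p hp1 hpk hcc
          rcases lt_trichotomy p k₁ with h | h | h
          · have := hm11 p k₁ hp1 h (le_refl _)
            omega
          · subst h; omega
          · omega
        obtain ⟨j, hj1, hj2, hj3⟩ := hfindj k₁ m (by omega) (le_refl _) rfl hmn hnotpos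
        obtain ⟨w', hcov, hYC', hvi', hgen', hvj'⟩ :=
          stepS1 hn hYY1 (by omega) (le_refl k₁) rfl hmn hj1 hj2 hj3
        have hmeas' : measS n w' k₁ = measS n w₁ k₁ - 1 := by
          apply hmeasS1 w' k₁ (by omega) (le_refl _) (by rw [hvi'])
          intro l hl1 hl2 hli
          exact hgen' l hl1 (by omega) hli (by omega)
        have hrec : Relation.ReflTransGen (covRel n) w' w₂ := by
          apply ih w' w₂ k₁ k₂ hYC' hYY2 hkk
          · intro l hl1 hl2
            rw [hgen' l hl1 (by omega) (by omega) (by omega)]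
            exact hle l hl1 hl2
          · rw [hmeas']
            push_cast
            omega
        exact Relation.ReflTransGen.head hcov hrec
    · -- k₁ = k₂
      have hkeq : k₁ = k₂ := by omega
      subst hkeq
      set D : Finset ℤ := (Finset.Icc (1:ℤ) k₁).filter
        (fun i => w₁.symm i < w₂.symm i) with hDdef
      by_cases hD : D = ∅
      · -- windows agree
        have hagree : ∀ i : ℤ, 1 ≤ i → i ≤ k₁ → w₁.symm i = w₂.symm i := by
          intro i hi1 hi2
          have hnot : i ∉ D := by rw [hD]; simp
          rw [hDdef, Finset.mem_filter] at hnot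
          have := hle i hi1 hi2
          by_contra hne
          exact hnot ⟨Finset.mem_Icc.mpr ⟨hi1, hi2⟩, by omega⟩
        rw [YC_unique hYY1 hYY2 hagree]
      · -- bump the largest discrepancy
        have hDne : D.Nonempty := Finset.nonempty_of_ne_empty hD
        set i : ℤ := D.max' hDne with hidef
        have himem : i ∈ D := Finset.max'_mem D hDne
        have himax : ∀ l ∈ D, l ≤ i := fun l hl => Finset.le_max' D l hl
        rw [hDdef, Finset.mem_filter, Finset.mem_Icc] at himem
        obtain ⟨⟨hi1, hi2⟩, hilt⟩ := himem
        set m : ℤ := w₁.symm i with hmdef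
        have hmn : m + 1 ≤ (n:ℤ) := by
          have := (sp_abs_le hsps2 (i := i) (by omega) (by omega)).2
          omega
        have hnotpos : ∀ p : ℤ, 1 ≤ p → p ≤ k₁ → w₁.symm p ≠ m + 1 := by
          intro p hp1 hpk hcc
          have hpi : i < p := by
            rcases lt_trichotomy p i with h | h | h
            · have := hm11 p i hp1 h hi2
              omega
            · subst h; omega
            · exact h
          have hpD : p ∉ D := by
            intro hmem
            have := himax p hmem
            omega
          rw [hDdef, Finset.mem_filter] at hpD
          have hnotlt : ¬ (w₁.symm p < w₂.symm p) := by
            intro hcc2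
            exact hpD ⟨Finset.mem_Icc.mpr ⟨hp1, hpk⟩, hcc2⟩
          have hle2 := hle p hp1 hpk
          have heq2 : w₂.symm p = m + 1 := by omega
          have : w₂.symm i < w₂.symm p := hm21 i p hi1 hpi hpk
          omega
        obtain ⟨j, hj1, hj2, hj3⟩ := hfindj i m hi1 hi2 rfl hmn hnotpos
        obtain ⟨w', hcov, hYC', hvi', hgen', hvj'⟩ :=
          stepS1 hn hYY1 hi1 hi2 rfl hmn hj1 hj2 hj3
        have hmeas' : measS n w' k₁ = measS n w₁ k₁ - 1 := by
          apply hmeasS1 w' i hi1 hi2 (by rw [hvi'])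
          intro l hl1 hl2 hli
          exact hgen' l hl1 (by omega) hli (by omega)
        have hrec : Relation.ReflTransGen (covRel n) w' w₂ := by
          apply ih w' w₂ k₁ k₁ hYC' hYY2 (le_refl _)
          · intro l hl1 hl2
            by_cases hli : l = i
            · subst hli
              rw [hvi']
              omega
            · rw [hgen' l hl1 (by omega) hli (by omega)]
              exact hle l hl1 hl2
          · rw [hmeas']
            push_cast
            omega
        exact Relation.ReflTransGen.head hcov hrec

/-- the function underlying `τ_n(w)` -/
noncomputable def tauF (n : ℕ) (w : Equiv.Perm ℤ) : ℤ → ℤ := fun x =>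
  if 1 ≤ x ∧ x ≤ (n:ℤ)+1 then
    (if x = 1 then 1 else (if 0 < w (x-1) then w (x-1) + 1 else w (x-1) - 1))
  else if 1 ≤ -x ∧ -x ≤ (n:ℤ)+1 then
    -(if -x = 1 then 1 else (if 0 < w (-x-1) then w (-x-1) + 1 else w (-x-1) - 1))
  else x

lemma tauF_odd (w : Equiv.Perm ℤ) (x : ℤ) : tauF n w (-x) = - tauF n w x := by
  unfold tauF
  simp only [neg_neg]
  split_ifs <;> omega

lemma tauF_fix (w : Equiv.Perm ℤ) (x : ℤ) (hx : (n:ℤ)+1 < |x|) : tauF n w x = x := by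
  have hx' : x < -((n:ℤ)+1) ∨ (n:ℤ)+1 < x := by
    rcases abs_cases x with ⟨h, _⟩ | ⟨h, _⟩ <;> omega
  unfold tauF
  rw [if_neg (by omega), if_neg (by omega)]

lemma tauF_pos_val (hsp : IsSignedPerm n w) {x : ℤ} (h1 : 2 ≤ x) (h2 : x ≤ (n:ℤ)+1) :
    tauF n w x = (if 0 < w (x-1) then w (x-1) + 1 else w (x-1) - 1) := by
  unfold tauF
  rw [if_pos (by omega), if_neg (by omega)]

lemma tauFG (hsp : IsSignedPerm n w) : ∀ x : ℤ, tauF n w.symm (tauF n w x) = x := by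
  have hsps := sp_symm hsp
  have hpos : ∀ x : ℤ, 1 ≤ x → x ≤ (n:ℤ)+1 → tauF n w.symm (tauF n w x) = x := by
    intro x hx1 hx2
    by_cases hx : x = 1
    · subst hx
      have e1 : tauF n w 1 = 1 := by unfold tauF; rw [if_pos (by omega), if_pos rfl]
      rw [e1]
      unfold tauF
      rw [if_pos (by omega), if_pos rfl]
    · have hx2' : 2 ≤ x := by omega
      rw [tauF_pos_val hsp hx2' hx2]
      have hv0 : w (x-1) ≠ 0 := sp_ne_zero hsp (by omega)
      have hvb := sp_abs_le hsp (i := x-1) (by omega) (by omega)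
      have hws : w.symm (w (x-1)) = x - 1 := w.symm_apply_apply (x-1)
      by_cases hv : 0 < w (x-1)
      · rw [if_pos hv]
        rw [tauF_pos_val hsps (by omega) (by omega)]
        have harg : w (x-1) + 1 - 1 = w (x-1) := by ring
        rw [harg, hws]
        rw [if_pos (by omega)]
        ring
      · rw [if_neg hv]
        unfold tauF
        rw [if_neg (by omega), if_pos (by omega)]
        have harg1 : -(w (x-1) - 1) = -(w (x-1)) + 1 := by ring
        rw [if_neg (by omega)]
        have harg2 : -(w (x-1) - 1) - 1 = -(w (x-1)) := by ring
        rw [harg2]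
        have hwsneg : w.symm (-(w (x-1))) = -(x-1) := by
          rw [hsps.1, hws]
        rw [hwsneg]
        rw [if_neg (by omega)]
        ring
  intro x
  rcases lt_trichotomy x 0 with hx | hx | hx
  · by_cases hxn : -((n:ℤ)+1) ≤ x
    · have e1 : tauF n w x = - tauF n w (-x) := by
        have := tauF_odd (n := n) w (-x)
        simp only [neg_neg] at this
        omega
      rw [e1, tauF_odd, hpos (-x) (by omega) (by omega)]
      ring
    · rw [tauF_fix w x (by rcases abs_cases x with ⟨h,_⟩|⟨h,_⟩ <;> omega),
        tauF_fix w.symm x (by rcases abs_cases x with ⟨h,_⟩|⟨h,_⟩ <;> omega)]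
  · subst hx
    have e1 : tauF n w 0 = 0 := by unfold tauF; rw [if_neg (by omega), if_neg (by omega)]
    rw [e1]
    unfold tauF
    rw [if_neg (by omega), if_neg (by omega)]
  · by_cases hxn : x ≤ (n:ℤ)+1
    · exact hpos x (by omega) hxn
    · rw [tauF_fix w x (by rcases abs_cases x with ⟨h,_⟩|⟨h,_⟩ <;> omega),
        tauF_fix w.symm x (by rcases abs_cases x with ⟨h,_⟩|⟨h,_⟩ <;> omega)]

/-- the permutation `τ_n(w)` -/
noncomputable def tauP (n : ℕ) (w : Equiv.Perm ℤ) (hsp : IsSignedPerm n w) :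
    Equiv.Perm ℤ where
  toFun := tauF n w
  invFun := tauF n w.symm
  left_inv := fun x => tauFG hsp x
  right_inv := fun x => by
    have := tauFG (sp_symm hsp) x
    rwa [Equiv.symm_symm] at this

lemma tauP_spec (hsp : IsSignedPerm n w) :
    IsSignedPerm (n+1) (tauP n w hsp) ∧ isTau n w (tauP n w hsp) := by
  have happ : ∀ x : ℤ, tauP n w hsp x = tauF n w x := fun x => rfl
  refine ⟨⟨?_, ?_⟩, ?_, ?_⟩
  · intro i
    rw [happ, happ]
    exact tauF_odd w i
  · intro i hi
    rw [happ]
    exact tauF_fix w i (by push_cast at hi ⊢; omega)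
  · rw [happ]
    unfold tauF
    rw [if_pos (by omega), if_pos rfl]
  · intro i hi1 hi2
    rw [happ, tauF_pos_val hsp (by omega) (by omega)]
    have harg : i + 1 - 1 = i := by ring
    rw [harg]

lemma tau_unique (hsp : IsSignedPerm n w) {u₁ u₂ : Equiv.Perm ℤ}
    (h1 : IsSignedPerm (n+1) u₁ ∧ isTau n w u₁)
    (h2 : IsSignedPerm (n+1) u₂ ∧ isTau n w u₂) : u₁ = u₂ := by
  obtain ⟨hsp1, ht11, ht12⟩ := h1
  obtain ⟨hsp2, ht21, ht22⟩ := h2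
  have key : ∀ x : ℤ, 1 ≤ x → x ≤ (n:ℤ)+1 → u₁ x = u₂ x := by
    intro x hx1 hx2
    by_cases hx : x = 1
    · rw [hx, ht11, ht21]
    · have e1 := ht12 (x-1) (by omega) (by omega)
      have e2 := ht22 (x-1) (by omega) (by omega)
      have harg : x - 1 + 1 = x := by ring
      rw [harg] at e1 e2
      rw [e1, e2]
  apply Equiv.ext
  intro x
  rcases lt_trichotomy x 0 with hx | hx | hx
  · by_cases hxn : -((n:ℤ)+1) ≤ x
    · have e1 : u₁ (-(-x)) = -(u₁ (-x)) := hsp1.1 (-x)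
      have e2 : u₂ (-(-x)) = -(u₂ (-x)) := hsp2.1 (-x)
      simp only [neg_neg] at e1 e2
      have := key (-x) (by omega) (by omega)
      omega
    · rw [hsp1.2 x (by push_cast; rcases abs_cases x with ⟨h,_⟩|⟨h,_⟩ <;> omega),
        hsp2.2 x (by push_cast; rcases abs_cases x with ⟨h,_⟩|⟨h,_⟩ <;> omega)]
  · rw [hx, sp_zero hsp1, sp_zero hsp2]
  · by_cases hxn : x ≤ (n:ℤ)+1
    · exact key x (by omega) hxn
    · rw [hsp1.2 x (by push_cast; rcases abs_cases x with ⟨h,_⟩|⟨h,_⟩ <;> omega),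
        hsp2.2 x (by push_cast; rcases abs_cases x with ⟨h,_⟩|⟨h,_⟩ <;> omega)]

lemma tau_symm_window (hsp : IsSignedPerm n w) (hu : IsSignedPerm (n+1) u)
    (ht : isTau n w u) :
    u.symm 1 = 1 ∧ ∀ m : ℤ, 1 ≤ m → m ≤ (n:ℤ) →
      u.symm (m+1) = (if 0 < w.symm m then w.symm m + 1 else w.symm m - 1) := by
  have hsps := sp_symm hsp
  constructor
  · have : u.symm (u 1) = 1 := u.symm_apply_apply 1
    rwa [ht.1] at this
  · intro m hm1 hm2
    set t : ℤ := w.symm m with htdef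
    have ht0 : t ≠ 0 := sp_ne_zero hsps (by omega)
    have htb := sp_abs_le hsps (i := m) (by omega) (by omega)
    have hwt : w t = m := w.apply_symm_apply m
    by_cases hpos : 0 < t
    · rw [if_pos hpos]
      have e1 := ht.2 t hpos (by omega)
      rw [hwt, if_pos (by omega)] at e1
      have : u.symm (m+1) = u.symm (u (t+1)) := by rw [e1]
      rwa [u.symm_apply_apply] at this
    · rw [if_neg hpos]
      have hwnt : w (-t) = -m := by
        rw [← hwt, ← hsp.1]
      have e1 := ht.2 (-t) (by omega) (by omega)
      rw [hwnt, if_neg (by omega)] at e1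
      have e2 : u (t - 1) = m + 1 := by
        have e3 : u (-(-t+1)) = -(u (-t+1)) := hu.1 (-t+1)
        have harg : -(-t+1) = t - 1 := by ring
        rw [harg] at e3
        omega
      have : u.symm (m+1) = u.symm (u (t-1)) := by rw [e2]
      rwa [u.symm_apply_apply] at this

lemma YC_tau {k : ℤ} (hn : 1 ≤ n) (hY : YC n w k) (hu : IsSignedPerm (n+1) u)
    (ht : isTau n w u) : YC (n+1) u (k+1) := by
  obtain ⟨hw, hk1, hkn, hpos, hneg, hm1, hm2⟩ := hY
  obtain ⟨hu1, hwin⟩ := tau_symm_window hw.1 hu ht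
  have hval : ∀ i : ℤ, 2 ≤ i → i ≤ (n:ℤ)+1 →
      u.symm i = (if 0 < w.symm (i-1) then w.symm (i-1) + 1 else w.symm (i-1) - 1) := by
    intro i h1 h2
    have e := hwin (i-1) (by omega) (by omega)
    have harg : i - 1 + 1 = i := by ring
    rwa [harg] at e
  have hncast : ((n+1 : ℕ) : ℤ) = (n:ℤ)+1 := by push_cast; ring
  refine ⟨⟨hu, by rw [hu1]; omega⟩, by omega, by rw [hncast]; omega, ?_, ?_, ?_, ?_⟩
  · intro i hi1 hi2
    by_cases hi : i = 1
    · rw [hi, hu1]; omega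
    · rw [hval i (by omega) (by omega)]
      have := hpos (i-1) (by omega) (by omega)
      rw [if_pos this]
      omega
  · intro i hi1 hi2
    rw [hncast] at hi2
    rw [hval i (by omega) (by omega)]
    have := hneg (i-1) (by omega) (by omega)
    rw [if_neg (by omega)]
    omega
  · intro i j hi1 hij hjk
    by_cases hi : i = 1
    · subst hi
      rw [hu1, hval j (by omega) (by omega)]
      have := hpos (j-1) (by omega) (by omega)
      rw [if_pos this]
      omega
    · rw [hval i (by omega) (by omega), hval j (by omega) (by omega)]
      have e1 := hpos (i-1) (by omega) (by omega)
      have e2 := hpos (j-1) (by omega) (by omega)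
      have e3 := hm1 (i-1) (j-1) (by omega) (by omega) (by omega)
      rw [if_pos e1, if_pos e2]
      omega
  · intro i j hi1 hij hjn
    rw [hncast] at hjn
    rw [hval i (by omega) (by omega), hval j (by omega) (by omega)]
    have e1 := hneg (i-1) (by omega) (by omega)
    have e2 := hneg (j-1) (by omega) (by omega)
    have e3 := hm2 (i-1) (j-1) (by omega) (by omega) (by omega)
    rw [if_neg (by omega), if_neg (by omega)]
    omega

lemma rtg_dom (hn : 1 ≤ n) {w₁ w₂ : Equiv.Perm ℤ}
    (h : Relation.ReflTransGen (covRel n) w₁ w₂) : Dom n w₁ w₂ := by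
  induction h with
  | refl => exact dom_refl n w₁
  | tail h1 h2 ih => exact dom_trans ih (covRel_dom hn h2)

end TauAux

/-- Let `Y_n = {w ∈ X_n : cdes(w⁻¹) ≤ 2}` and let `τ_n(w) ∈ 𝔅_{n+1}`
be the signed permutation with window `1 w'_1 ⋯ w'_n`, where `w'_i` shifts `w_i` away
from `0` by one. Then `τ_n(w)` exists and is unique, `τ_n(Y_n) ⊆ Y_{n+1}`, and `τ_n` is
a poset embedding: `u ≤ w` in `X_n` iff `τ_n(u) ≤ τ_n(w)` in `X_{n+1}`. -/
theorem tau_poset_embedding (n : ℕ) (hn : 1 ≤ n) :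
    (∀ w : Equiv.Perm ℤ, InXn n w → cdes n w.symm ≤ 2 →
      ∃! u : Equiv.Perm ℤ, IsSignedPerm (n + 1) u ∧ isTau n w u) ∧
    (∀ w u : Equiv.Perm ℤ, InXn n w → cdes n w.symm ≤ 2 →
      IsSignedPerm (n + 1) u → isTau n w u →
      InXn (n + 1) u ∧ cdes (n + 1) u.symm ≤ 2) ∧
    (∀ w₁ u₁ w₂ u₂ : Equiv.Perm ℤ,
      InXn n w₁ → cdes n w₁.symm ≤ 2 → InXn n w₂ → cdes n w₂.symm ≤ 2 →
      IsSignedPerm (n + 1) u₁ → isTau n w₁ u₁ →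
      IsSignedPerm (n + 1) u₂ → isTau n w₂ u₂ →
      (Relation.ReflTransGen (covRel n) w₁ w₂ ↔
        Relation.ReflTransGen (covRel (n + 1)) u₁ u₂)) := by
  refine ⟨?_, ?_, ?_⟩
  · -- existence and uniqueness of τ
    intro w hw _
    refine ⟨tauP n w hw.1, tauP_spec hw.1, ?_⟩
    intro u hu
    exact tau_unique hw.1 hu (tauP_spec hw.1)
  · -- τ lands in Y
    intro w u hw hc hu ht
    obtain ⟨k, hY⟩ := classification hn hw hc
    have hYu := YC_tau hn hY hu ht
    exact ⟨hYu.1, YC_cdes (by omega) hYu⟩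
  · -- poset embedding
    intro w₁ u₁ w₂ u₂ hw1 hc1 hw2 hc2 hu1 ht1 hu2 ht2
    obtain ⟨k₁, hY1⟩ := classification hn hw1 hc1
    obtain ⟨k₂, hY2⟩ := classification hn hw2 hc2
    have hYu1 := YC_tau hn hY1 hu1 ht1
    have hYu2 := YC_tau hn hY2 hu2 ht2
    obtain ⟨hsw1, hwin1⟩ := tau_symm_window hw1.1 hu1 ht1
    obtain ⟨hsw2, hwin2⟩ := tau_symm_window hw2.1 hu2 ht2
    have hk11 : 1 ≤ k₁ := hY1.2.1
    have hk1n : k₁ ≤ (n:ℤ) := hY1.2.2.1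
    have hk21 : 1 ≤ k₂ := hY2.2.1
    have hk2n : k₂ ≤ (n:ℤ) := hY2.2.2.1
    have hpos1 := hY1.2.2.2.1
    have hpos2 := hY2.2.2.2.1
    constructor
    · intro hchain
      have hdom := rtg_dom hn hchain
      obtain ⟨hkk, hvle⟩ := lemmaN hn hY1 hY2 hdom
      apply lemmaS (n := n+1) (by omega) (measS (n+1) u₁ (k₁+1)).toNat u₁ u₂ (k₁+1) (k₂+1)
        hYu1 hYu2 (by omega)
      · intro i hi1 hi2
        by_cases hi : i = 1
        · rw [hi, hsw1, hsw2]
        · have e1 := hwin1 (i-1) (by omega) (by omega)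
          have e2 := hwin2 (i-1) (by omega) (by omega)
          have harg : i - 1 + 1 = i := by ring
          rw [harg] at e1 e2
          rw [e1, e2]
          have p1 : 0 < w₁.symm (i-1) := hpos1 (i-1) (by omega) (by omega)
          have p2 : 0 < w₂.symm (i-1) := hpos2 (i-1) (by omega) (by omega)
          rw [if_pos p1, if_pos p2]
          have := hvle (i-1) (by omega) (by omega)
          omega
      · exact Int.self_le_toNat _
    · intro hchain
      have hdom := rtg_dom (by omega : 1 ≤ n+1) hchain
      obtain ⟨hkk, hvle⟩ := lemmaN (by omega : 1 ≤ n+1) hYu1 hYu2 hdom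
      apply lemmaS hn (measS n w₁ k₁).toNat w₁ w₂ k₁ k₂ hY1 hY2 (by omega)
      · intro i hi1 hi2
        have e1 := hwin1 i (by omega) (by omega)
        have e2 := hwin2 i (by omega) (by omega)
        have hv := hvle (i+1) (by omega) (by omega)
        rw [e1, e2] at hv
        have p1 : 0 < w₁.symm i := hpos1 i (by omega) (by omega)
        have p2 : 0 < w₂.symm i := hpos2 i (by omega) (by omega)
        rw [if_pos p1, if_pos p2] at hv
        omega
      · exact Int.self_le_toNat _
end
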